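/- arXiv:2210.06321 — 4 statements merged into one kernel-verified Lean document; each statement's English description precedes it below -/
import Mathlib

section
/- Let X and Y be complete metric spaces and Γ: X × Y → X × Y be continuous, given by Γ(x,y) = (Λ(x), Φ(x,y)), where Λ: X → X is a contraction and there exists 0 < γ < 1 such that d_Y(Φ(x,y₁), Φ(x,y₂)) ≤ γ d_Y(y₁,y₂) for all x ∈ X and y₁,y₂ ∈ Y. Then Λ has a unique fixed point x∞, the map Φ(x∞,·) has a unique fixed point y∞, and (x∞, y∞) is a globally attracting fixed point of Γ: for every (x,y) ∈ X × Y, Γⁿ(x,y) → (x∞, y∞) as n → ∞. -/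
open Filter

private lemma aux_tendsto {γ : ℝ} (hγ0 : 0 ≤ γ) (hγ1 : γ < 1) (a e : ℕ → ℝ)
    (ha : ∀ n, 0 ≤ a n) (he0 : ∀ n, 0 ≤ e n)
    (hrec : ∀ n, a (n + 1) ≤ γ * a n + e n)
    (he : Tendsto e atTop (nhds 0)) : Tendsto a atTop (nhds 0) := by
  rw [Metric.tendsto_atTop]
  intro ε hε
  have h1γ : 0 < 1 - γ := by linarith
  have hεh : 0 < (1 - γ) * ε / 2 := by positivity
  obtain ⟨N, hN⟩ := (Metric.tendsto_atTop.1 he) ((1 - γ) * ε / 2) hεh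
  have hNe : ∀ n ≥ N, e n ≤ (1 - γ) * ε / 2 := by
    intro n hn
    have := hN n hn
    rw [Real.dist_eq, sub_zero, abs_of_nonneg (he0 n)] at this
    linarith
  have key : ∀ m, a (N + m) ≤ γ ^ m * a N + ε / 2 := by
    intro m
    induction m with
    | zero => simp; linarith [ha N, hε]
    | succ m ih =>
      have h1 : a (N + m + 1) ≤ γ * a (N + m) + e (N + m) := hrec (N + m)
      have h2 : e (N + m) ≤ (1 - γ) * ε / 2 := hNe _ (Nat.le_add_right N m)
      have h3 : γ * a (N + m) ≤ γ * (γ ^ m * a N + ε / 2) :=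
        mul_le_mul_of_nonneg_left ih hγ0
      have : a (N + (m + 1)) = a (N + m + 1) := by ring_nf
      rw [this]
      calc a (N + m + 1) ≤ γ * (γ ^ m * a N + ε / 2) + (1 - γ) * ε / 2 := by linarith
        _ = γ ^ (m + 1) * a N + (γ * ε / 2 + (1 - γ) * ε / 2) := by ring
        _ ≤ γ ^ (m + 1) * a N + ε / 2 := by nlinarith
  have hgeo : Tendsto (fun m => γ ^ m * a N) atTop (nhds 0) := by
    simpa using (tendsto_pow_atTop_nhds_zero_of_lt_one hγ0 hγ1).mul_const (a N)
  obtain ⟨M, hM⟩ := (Metric.tendsto_atTop.1 hgeo) (ε / 2) (by positivity)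
  refine ⟨N + M, fun n hn => ?_⟩
  have hm : ∃ m, n = N + m ∧ m ≥ M := ⟨n - N, by omega, by omega⟩
  obtain ⟨m, rfl, hmM⟩ := hm
  have h1 := key m
  have h2 := hM m hmM
  rw [Real.dist_eq, sub_zero] at h2 ⊢
  have hg0 : 0 ≤ γ ^ m * a N := mul_nonneg (pow_nonneg hγ0 m) (ha N)
  rw [abs_of_nonneg (ha _)]
  rw [abs_of_nonneg hg0] at h2
  linarith

theorem stmt_6 {X Y : Type*} [MetricSpace X] [MetricSpace Y]
    [CompleteSpace X] [CompleteSpace Y] [Nonempty X] [Nonempty Y]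
    (Λ : X → X) (Φ : X × Y → Y)
    (Γ : X × Y → X × Y) (hΓ : Γ = fun p => (Λ p.1, Φ p))
    (hΓcont : Continuous Γ)
    (k : NNReal) (hk : k < 1) (hΛ : LipschitzWith k Λ)
    (γ : ℝ) (hγ0 : 0 < γ) (hγ1 : γ < 1)
    (hΦ : ∀ (x : X) (y₁ y₂ : Y), dist (Φ (x, y₁)) (Φ (x, y₂)) ≤ γ * dist y₁ y₂) :
    ∃ xlim : X, ∃ ylim : Y,
      Λ xlim = xlim ∧ (∀ x, Λ x = x → x = xlim) ∧
      Φ (xlim, ylim) = ylim ∧ (∀ y, Φ (xlim, y) = y → y = ylim) ∧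
      Γ (xlim, ylim) = (xlim, ylim) ∧
      ∀ p : X × Y, Filter.Tendsto (fun n => Γ^[n] p) Filter.atTop (nhds (xlim, ylim)) := by
  have hΛc : ContractingWith k Λ := ⟨hk, hΛ⟩
  set xlim := hΛc.fixedPoint Λ with hxlim
  have hx : Λ xlim = xlim := hΛc.fixedPoint_isFixedPt
  set γ' : NNReal := ⟨γ, hγ0.le⟩ with hγ'
  have hg : LipschitzWith γ' (fun y => Φ (xlim, y)) := by
    apply LipschitzWith.of_dist_le_mul
    intro y₁ y₂
    exact hΦ xlim y₁ y₂
  have hgc : ContractingWith γ' (fun y => Φ (xlim, y)) := ⟨by exact_mod_cast hγ1, hg⟩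
  set ylim := hgc.fixedPoint _ with hylim
  have hy : Φ (xlim, ylim) = ylim := hgc.fixedPoint_isFixedPt
  have hΦcont : Continuous Φ := by
    have : Φ = fun p => (Γ p).2 := by rw [hΓ]
    rw [this]; exact hΓcont.snd
  -- first coordinate of iterates
  have hΓ' : ∀ q : X × Y, Γ q = (Λ q.1, Φ q) := fun q => by rw [hΓ]
  have hfst : ∀ (p : X × Y) n, (Γ^[n] p).1 = Λ^[n] p.1 := by
    intro p n
    induction n with
    | zero => rfl
    | succ n ih =>
      rw [Function.iterate_succ_apply', Function.iterate_succ_apply', hΓ' (Γ^[n] p), ← ih]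
  refine ⟨xlim, ylim, hx, fun x hfx => hΛc.fixedPoint_unique hfx, hy,
    fun y hfy => hgc.fixedPoint_unique hfy, by rw [hΓ]; simp [hx, hy], fun p => ?_⟩
  -- convergence
  have hxconv : Tendsto (fun n => (Γ^[n] p).1) atTop (nhds xlim) := by
    simp only [hfst]
    exact hΛc.tendsto_iterate_fixedPoint p.1
  set a : ℕ → ℝ := fun n => dist (Γ^[n] p).2 ylim with ha
  set e : ℕ → ℝ := fun n => dist (Φ (Λ^[n] p.1, ylim)) ylim with he
  have hrec : ∀ n, a (n + 1) ≤ γ * a n + e n := by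
    intro n
    have h1 : (Γ^[n+1] p).2 = Φ (Λ^[n] p.1, (Γ^[n] p).2) := by
      have hq : Γ^[n] p = (Λ^[n] p.1, (Γ^[n] p).2) := Prod.ext (hfst p n) rfl
      rw [Function.iterate_succ_apply', hΓ' (Γ^[n] p)]
      simp only []
      rw [← hq]
    simp only [ha, he, h1]
    calc dist (Φ (Λ^[n] p.1, (Γ^[n] p).2)) ylim
        ≤ dist (Φ (Λ^[n] p.1, (Γ^[n] p).2)) (Φ (Λ^[n] p.1, ylim))
          + dist (Φ (Λ^[n] p.1, ylim)) ylim := dist_triangle _ _ _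
      _ ≤ γ * dist (Γ^[n] p).2 ylim + dist (Φ (Λ^[n] p.1, ylim)) ylim := by
          linarith [hΦ (Λ^[n] p.1) (Γ^[n] p).2 ylim]
  have hetends : Tendsto e atTop (nhds 0) := by
    have h1 : Tendsto (fun n => (Λ^[n] p.1, ylim)) atTop (nhds (xlim, ylim)) :=
      (hΛc.tendsto_iterate_fixedPoint p.1).prodMk_nhds tendsto_const_nhds
    have h2 : Tendsto (fun n => Φ (Λ^[n] p.1, ylim)) atTop (nhds (Φ (xlim, ylim))) :=
      (hΦcont.tendsto _).comp h1
    rw [hy] at h2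
    simpa [he] using (tendsto_iff_dist_tendsto_zero.1 h2)
  have hatends : Tendsto a atTop (nhds 0) :=
    aux_tendsto hγ0.le hγ1 a e (fun n => dist_nonneg) (fun n => dist_nonneg) hrec hetends
  have hyconv : Tendsto (fun n => (Γ^[n] p).2) atTop (nhds ylim) :=
    tendsto_iff_dist_tendsto_zero.2 hatends
  have : (fun n => Γ^[n] p) = fun n => ((Γ^[n] p).1, (Γ^[n] p).2) := by
    funext n; rfl
  rw [this]
  exact hxconv.prodMk_nhds hyconv
end

section
/- Let H: ℝ → ℝ be continuous, g: ℝ → ℝ bounded continuous, f⁻¹: ℝ → ℝ any function, and L ≥ 0. The map S: C⁰_b(ℝ; L) → C⁰_b(ℝ) defined by S(φ) = H ∘ (φ∘φ∘f⁻¹ − g∘f⁻¹) is continuous with respect to the supremum norm. -/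
theorem stmt_13 (H : ℝ → ℝ) (hH : Continuous H)
    (g : ℝ → ℝ) (hgc : Continuous g) (hgb : ∃ M, ∀ x, |g x| ≤ M)
    (finv : ℝ → ℝ) (L : ℝ) (hL : 0 ≤ L)
    (φ₀ : BoundedContinuousFunction ℝ ℝ)
    (hφ₀lip : ∀ x y : ℝ, |φ₀ x - φ₀ y| ≤ L * |x - y|) :
    ∀ ε > (0 : ℝ), ∃ δ > (0 : ℝ), ∀ φ : BoundedContinuousFunction ℝ ℝ,
      (∀ x y : ℝ, |φ x - φ y| ≤ L * |x - y|) → dist φ φ₀ < δ →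
        ⨆ x : ℝ, |H (φ (φ (finv x)) - g (finv x)) -
          H (φ₀ (φ₀ (finv x)) - g (finv x))| < ε := by
  obtain ⟨M, hM⟩ := hgb
  have hM0 : 0 ≤ M := le_trans (abs_nonneg _) (hM 0)
  have hn0 : 0 ≤ ‖φ₀‖ := norm_nonneg _
  set C : ℝ := ‖φ₀‖ + 1 + M with hC
  intro ε hε
  have hK : IsCompact (Set.Icc (-C) C) := isCompact_Icc
  have hu : UniformContinuousOn H (Set.Icc (-C) C) :=
    hK.uniformContinuousOn_of_continuous hH.continuousOn
  rw [Metric.uniformContinuousOn_iff] at hu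
  obtain ⟨η, hη, hη'⟩ := hu (ε/2) (by linarith)
  have hL1 : (0:ℝ) < L + 1 := by linarith
  refine ⟨min 1 (η / (L + 1)), by positivity, ?_⟩
  intro φ hlip hd
  have hd1 : dist φ φ₀ < 1 := lt_of_lt_of_le hd (min_le_left _ _)
  have hdη : (L + 1) * dist φ φ₀ < η := by
    have h2 : dist φ φ₀ < η / (L + 1) := lt_of_lt_of_le hd (min_le_right _ _)
    calc (L + 1) * dist φ φ₀ < (L + 1) * (η / (L + 1)) :=
          (mul_lt_mul_iff_right₀ hL1).mpr h2
      _ = η := by field_simp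
  have hptd : ∀ z, |φ z - φ₀ z| ≤ dist φ φ₀ := fun z => by
    rw [← Real.dist_eq]; exact BoundedContinuousFunction.dist_coe_le_dist z
  have hdnn : 0 ≤ dist φ φ₀ := dist_nonneg
  have key : ∀ x, |H (φ (φ (finv x)) - g (finv x)) -
      H (φ₀ (φ₀ (finv x)) - g (finv x))| ≤ ε / 2 := by
    intro x
    set y := finv x with hy
    have hφb : ∀ z, |φ z| ≤ ‖φ₀‖ + 1 := by
      intro z
      have h1 := hptd z
      have h0 : |φ₀ z| ≤ ‖φ₀‖ := φ₀.norm_coe_le_norm z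
      calc |φ z| = |(φ z - φ₀ z) + φ₀ z| := by ring_nf
        _ ≤ |φ z - φ₀ z| + |φ₀ z| := abs_add_le _ _
        _ ≤ ‖φ₀‖ + 1 := by linarith
    have ha : φ (φ y) - g y ∈ Set.Icc (-C) C := by
      obtain ⟨h1, h2⟩ := abs_le.mp (hφb (φ y))
      obtain ⟨h3, h4⟩ := abs_le.mp (hM y)
      constructor <;> simp only [hC] <;> linarith
    have hb : φ₀ (φ₀ y) - g y ∈ Set.Icc (-C) C := by
      obtain ⟨h1, h2⟩ := abs_le.mp (φ₀.norm_coe_le_norm (φ₀ y))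
      obtain ⟨h3, h4⟩ := abs_le.mp (hM y)
      constructor <;> simp only [hC] <;> linarith
    have hdist : dist (φ (φ y) - g y) (φ₀ (φ₀ y) - g y) < η := by
      rw [Real.dist_eq]
      have : |φ (φ y) - g y - (φ₀ (φ₀ y) - g y)| = |φ (φ y) - φ₀ (φ₀ y)| := by
        ring_nf
      rw [this]
      have h1 : |φ (φ y) - φ (φ₀ y)| ≤ L * |φ y - φ₀ y| := hlip _ _
      have h2 : |φ (φ₀ y) - φ₀ (φ₀ y)| ≤ dist φ φ₀ := hptd _
      have h3 : |φ y - φ₀ y| ≤ dist φ φ₀ := hptd _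
      have h4 : L * |φ y - φ₀ y| ≤ L * dist φ φ₀ := by
        exact mul_le_mul_of_nonneg_left h3 hL
      calc |φ (φ y) - φ₀ (φ₀ y)|
          = |(φ (φ y) - φ (φ₀ y)) + (φ (φ₀ y) - φ₀ (φ₀ y))| := by ring_nf
        _ ≤ |φ (φ y) - φ (φ₀ y)| + |φ (φ₀ y) - φ₀ (φ₀ y)| := abs_add_le _ _
        _ ≤ L * dist φ φ₀ + dist φ φ₀ := by linarith
        _ = (L + 1) * dist φ φ₀ := by ring
        _ < η := hdη
    have := hη' _ ha _ hb hdist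
    rw [Real.dist_eq] at this
    linarith
  have hsup : (⨆ x : ℝ, |H (φ (φ (finv x)) - g (finv x)) -
      H (φ₀ (φ₀ (finv x)) - g (finv x))|) ≤ ε / 2 :=
    Real.iSup_le key (by linarith)
  linarith
end

section
/- Let h, f, g: ℝ → ℝ be C¹ functions with inf_x |h'(x)| ≥ K, inf_x |f'(x)| ≥ α, sup_x |g(x)| < ∞, and sup_x |g'(x)| ≤ β, where K > 1, α > 0, β > 0 satisfy: β < α²K²/4 when α < 2(1 − 1/K), and β < (K−1)(αK − K + 1) when α ≥ 2(1 − 1/K). Then there exists a C¹ function φ: ℝ → ℝ with bounded derivative satisfying φ(φ(x)) = h(φ(f(x))) + g(x) for all x ∈ ℝ. -/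
open Function Set Filter Topology

lemma aux_abs_mul_le {x y X Y : ℝ} (hx : |x| ≤ X) (hy : |y| ≤ Y) :
    |x * y| ≤ X * Y := by
  rw [abs_mul]
  exact mul_le_mul hx hy (abs_nonneg _) (le_trans (abs_nonneg _) hx)

lemma aux_prod3 {x₁ x₂ u₁ u₂ w₁ w₂ X U Wb dx du dw : ℝ}
    (hx : |x₂| ≤ X) (hu : |u₁| ≤ U) (hu2 : |u₂| ≤ U) (hw1 : |w₁| ≤ Wb)
    (hdx : |x₁ - x₂| ≤ dx) (hdu : |u₁ - u₂| ≤ du) (hdw : |w₁ - w₂| ≤ dw) :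
    |x₁ * (u₁ * w₁) - x₂ * (u₂ * w₂)| ≤ dx * (U * Wb) + X * (du * Wb) + X * (U * dw) := by
  have key : x₁ * (u₁ * w₁) - x₂ * (u₂ * w₂) =
      ((x₁ - x₂) * (u₁ * w₁) + x₂ * ((u₁ - u₂) * w₁)) + x₂ * (u₂ * (w₁ - w₂)) := by ring
  rw [key]
  have b1 : |(x₁ - x₂) * (u₁ * w₁)| ≤ dx * (U * Wb) :=
    aux_abs_mul_le hdx (aux_abs_mul_le hu hw1)
  have b2 : |x₂ * ((u₁ - u₂) * w₁)| ≤ X * (du * Wb) :=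
    aux_abs_mul_le hx (aux_abs_mul_le hdu hw1)
  have b3 : |x₂ * (u₂ * (w₁ - w₂))| ≤ X * (U * dw) :=
    aux_abs_mul_le hx (aux_abs_mul_le hu2 hdw)
  calc |(x₁ - x₂) * (u₁ * w₁) + x₂ * ((u₁ - u₂) * w₁) + x₂ * (u₂ * (w₁ - w₂))|
      ≤ |(x₁ - x₂) * (u₁ * w₁) + x₂ * ((u₁ - u₂) * w₁)| + |x₂ * (u₂ * (w₁ - w₂))| :=
        abs_add_le _ _
    _ ≤ (|(x₁ - x₂) * (u₁ * w₁)| + |x₂ * ((u₁ - u₂) * w₁)|) + |x₂ * (u₂ * (w₁ - w₂))| :=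
        add_le_add (abs_add_le _ _) le_rfl
    _ ≤ dx * (U * Wb) + X * (du * Wb) + X * (U * dw) := by linarith

lemma aux_ucomp {u : ℝ → ℝ} (hu : Continuous u) {S : Set ℝ} (hS : IsCompact S) :
    ∀ ε > 0, ∃ δ > 0, ∀ a ∈ S, ∀ b ∈ S, |a - b| ≤ δ → |u a - u b| ≤ ε := by
  intro ε hε
  have huc := hS.uniformContinuousOn_of_continuous hu.continuousOn
  rw [Metric.uniformContinuousOn_iff] at huc
  obtain ⟨δ, hδ0, hδ⟩ := huc ε hε
  refine ⟨δ/2, by linarith, fun a ha b hb hab => ?_⟩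
  have := hδ a ha b hb (by rw [Real.dist_eq]; linarith)
  rw [Real.dist_eq] at this
  linarith

lemma aux_upper_lip {u : ℝ → ℝ} (hd : Differentiable ℝ u) {M : ℝ}
    (hM : ∀ x, |deriv u x| ≤ M) : ∀ a b : ℝ, |u a - u b| ≤ M * |a - b| := by
  have key : ∀ a b : ℝ, a < b → |u b - u a| ≤ M * |b - a| := by
    intro a b hab
    obtain ⟨ξ, _, hξ⟩ := exists_deriv_eq_slope u hab hd.continuous.continuousOn
      (hd.differentiableOn)
    have hba : (0:ℝ) < b - a := by linarith
    have h1 : u b - u a = deriv u ξ * (b - a) := by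
      field_simp at hξ; linarith [hξ]
    rw [h1, abs_mul, abs_of_pos hba]
    nlinarith [hM ξ, abs_nonneg (deriv u ξ)]
  intro a b
  rcases lt_trichotomy a b with hab | hab | hab
  · have := key a b hab
    rw [abs_sub_comm (u b), abs_sub_comm b] at this
    exact this
  · simp [hab]
  · exact key b a hab

lemma aux_lower_lip {u : ℝ → ℝ} (hu : Differentiable ℝ u) {c : ℝ}
    (hc : ∀ x, c ≤ |deriv u x|) : ∀ a b : ℝ, c * |a - b| ≤ |u a - u b| := by
  have key : ∀ a b : ℝ, a < b → c * |b - a| ≤ |u b - u a| := by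
    intro a b hab
    obtain ⟨ξ, _, hξ⟩ := exists_deriv_eq_slope u hab hu.continuous.continuousOn
      (hu.differentiableOn)
    have hba : (0:ℝ) < b - a := by linarith
    have h1 : u b - u a = deriv u ξ * (b - a) := by
      field_simp at hξ; linarith [hξ]
    rw [h1, abs_mul, abs_of_pos hba]
    nlinarith [hc ξ, abs_nonneg (deriv u ξ)]
  intro a b
  rcases lt_trichotomy a b with hab | hab | hab
  · have := key a b hab
    rw [abs_sub_comm (u b), abs_sub_comm b] at this
    exact this
  · simp [hab]
  · exact key b a hab

lemma aux_surj_mono {u : ℝ → ℝ} (hu : Continuous u) {c : ℝ} (hcpos : 0 < c)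
    (hlow : ∀ a b : ℝ, c * |a - b| ≤ |u a - u b|)
    (hmono : StrictMono u) : Surjective u := by
  apply hu.surjective
  · apply tendsto_atTop_mono' _ (f₁ := fun x => u 0 + c * x)
    · filter_upwards [eventually_ge_atTop (0:ℝ)] with x hx
      have h1 := hlow x 0
      have h2 : u 0 ≤ u x := (hmono.le_iff_le).2 hx
      rw [sub_zero, abs_of_nonneg hx,
        abs_of_nonneg (by linarith : (0:ℝ) ≤ u x - u 0)] at h1
      linarith
    · exact tendsto_atTop_add_const_left _ _
        (tendsto_id.const_mul_atTop hcpos)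
  · apply tendsto_atBot_mono' _ (f₁ := fun x => u 0 + c * x)
    · filter_upwards [eventually_le_atBot (0:ℝ)] with x hx
      have h1 := hlow x 0
      have h2 : u x ≤ u 0 := (hmono.le_iff_le).2 hx
      rw [sub_zero, abs_of_nonpos hx,
        abs_of_nonpos (by linarith : u x - u 0 ≤ 0)] at h1
      linarith
    · exact tendsto_atBot_add_const_left _ _
        (tendsto_id.const_mul_atBot hcpos)

lemma aux_inv_pack {u : ℝ → ℝ} (hu : ContDiff ℝ 1 u) {c : ℝ} (hcpos : 0 < c)
    (hc : ∀ x, c ≤ |deriv u x|) :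
    (∀ x, Function.invFun u (u x) = x) ∧
    (∀ y, u (Function.invFun u y) = y) ∧
    (∀ a b : ℝ, |Function.invFun u a - Function.invFun u b| ≤ c⁻¹ * |a - b|) ∧
    (∀ y, HasDerivAt (Function.invFun u) ((deriv u (Function.invFun u y))⁻¹) y) ∧
    Continuous (Function.invFun u) := by
  have hdiff : Differentiable ℝ u := hu.differentiable one_ne_zero
  have hlow := aux_lower_lip hdiff hc
  have hinj : Injective u := by
    intro a b hab
    have h1 := hlow a b
    rw [hab, sub_self, abs_zero] at h1
    have h2 : |a - b| ≤ 0 := by nlinarith [abs_nonneg (a-b)]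
    have : a - b = 0 := abs_eq_zero.mp (le_antisymm h2 (abs_nonneg _))
    linarith
  have hcd : Continuous (deriv u) := hu.continuous_deriv le_rfl
  have hne : ∀ x, deriv u x ≠ 0 := by
    intro x hx
    have := hc x
    rw [hx] at this; simp at this; linarith
  have hsgn : (∀ x, 0 < deriv u x) ∨ (∀ x, deriv u x < 0) := by
    by_cases hp : ∀ x, 0 < deriv u x
    · exact Or.inl hp
    · right
      push_neg at hp
      obtain ⟨a, ha⟩ := hp
      have ha' : deriv u a < 0 := lt_of_le_of_ne ha (hne a)
      intro x
      by_contra hx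
      push_neg at hx
      have hx' : 0 < deriv u x := lt_of_le_of_ne hx (Ne.symm (hne x))
      have : (0:ℝ) ∈ uIcc (deriv u a) (deriv u x) := by
        rw [Set.mem_uIcc]; left; constructor <;> linarith
      obtain ⟨z, _, hz⟩ := intermediate_value_uIcc (hcd.continuousOn) this
      exact hne z hz
  have hsurj : Surjective u := by
    rcases hsgn with hp | hn
    · exact aux_surj_mono hdiff.continuous hcpos hlow (strictMono_of_deriv_pos hp)
    · have hder : ∀ x, deriv (fun x => -u x) x = -deriv u x := fun x => deriv.neg
      have hv : Surjective (fun x => -u x) := by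
        apply aux_surj_mono hdiff.continuous.neg hcpos
        · intro a b
          have h1 := hlow a b
          have : |(-u a) - (-u b)| = |u a - u b| := by
            rw [show (-u a) - (-u b) = -(u a - u b) by ring, abs_neg]
          rw [Pi.neg_apply, Pi.neg_apply, this]; exact h1
        · apply strictMono_of_deriv_pos
          intro x; show 0 < deriv (fun x => -u x) x; rw [hder]; linarith [hn x]
      intro y
      obtain ⟨x, hx⟩ := hv (-y)
      exact ⟨x, by simpa using congrArg Neg.neg hx⟩
  have hli : ∀ x, Function.invFun u (u x) = x := fun x => Function.leftInverse_invFun hinj x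
  have hri : ∀ y, u (Function.invFun u y) = y := fun y => Function.rightInverse_invFun hsurj y
  have hlip : ∀ a b : ℝ, |Function.invFun u a - Function.invFun u b| ≤ c⁻¹ * |a - b| := by
    intro a b
    have h1 := hlow (Function.invFun u a) (Function.invFun u b)
    rw [hri a, hri b] at h1
    rw [← mul_le_mul_iff_right₀ hcpos, ← mul_assoc, mul_inv_cancel₀ hcpos.ne', one_mul]
    exact h1
  have hcont : Continuous (Function.invFun u) := by
    have : LipschitzWith (Real.toNNReal c⁻¹) (Function.invFun u) := by
      apply LipschitzWith.of_dist_le_mul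
      intro a b
      rw [Real.coe_toNNReal _ (by positivity)]
      simpa [Real.dist_eq] using hlip a b
    exact this.continuous
  refine ⟨hli, hri, hlip, ?_, hcont⟩
  intro y
  apply HasDerivAt.of_local_left_inverse hcont.continuousAt
    ((hdiff (Function.invFun u y)).hasDerivAt) (hne _)
  exact Filter.Eventually.of_forall hri

noncomputable def auxT (Hi Fi g : ℝ → ℝ) (ψ : ℝ → ℝ) : ℝ → ℝ :=
  fun t => Hi (ψ (ψ (Fi t)) - g (Fi t))

noncomputable def auxD (h f g Hi Fi : ℝ → ℝ) (ψ p : ℝ → ℝ) : ℝ → ℝ :=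
  fun t => (deriv h (Hi (ψ (ψ (Fi t)) - g (Fi t))))⁻¹ *
    ((p (ψ (Fi t)) * p (Fi t) - deriv g (Fi t)) * (deriv f (Fi t))⁻¹)

noncomputable def auxW (h f g Hi Fi : ℝ → ℝ) : ℕ → (ℝ → ℝ) × (ℝ → ℝ)
  | 0 => (fun _ => 0, fun _ => 0)
  | n+1 => (auxT Hi Fi g (auxW h f g Hi Fi n).1,
            auxD h f g Hi Fi (auxW h f g Hi Fi n).1 (auxW h f g Hi Fi n).2)

-- pick the key constant M
lemma aux_constM {K α β : ℝ} (hK : 1 < K) (hα : 0 < α) (hβ : 0 < β)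
    (hcond1 : α < 2 * (1 - 1 / K) → β < α ^ 2 * K ^ 2 / 4)
    (hcond2 : 2 * (1 - 1 / K) ≤ α → β < (K - 1) * (α * K - K + 1)) :
    ∃ M : ℝ, 0 < M ∧ M < K - 1 ∧ M ^ 2 + β < α * K * M ∧ 2 * M < α * K := by
  have hK0 : (0:ℝ) < K := by linarith
  set M₀ : ℝ := min (α * K / 2) (K - 1) with hM₀def
  have hM₀pos : 0 < M₀ := lt_min (by positivity) (by linarith)
  have hq0 : M₀ ^ 2 + β < α * K * M₀ := by
    rcases le_or_gt (2 * (1 - 1 / K)) α with hc | hc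
    · have hKinv : (1:ℝ)/K * K = 1 := by field_simp
      have h1 : K - 1 ≤ α * K / 2 := by
        have := mul_le_mul_of_nonneg_right hc hK0.le
        nlinarith
      have hM₀ : M₀ = K - 1 := min_eq_right h1
      have h2 := hcond2 hc
      rw [hM₀]; nlinarith
    · have hKinv : (1:ℝ)/K * K = 1 := by field_simp
      have h1 : α * K / 2 ≤ K - 1 := by
        have := mul_lt_mul_of_pos_right hc hK0
        nlinarith
      have hM₀ : M₀ = α * K / 2 := min_eq_left h1
      have h2 := hcond1 hc
      rw [hM₀]; nlinarith
  set q0 : ℝ := α * K * M₀ - M₀ ^ 2 - β with hq0def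
  have hq0pos : 0 < q0 := by simp only [hq0def]; linarith
  set ε : ℝ := min (M₀ / 2) (min 1 (q0 / (2 * (α * K + 1)))) with hεdef
  have hε0 : 0 < ε := by
    apply lt_min (by linarith)
    apply lt_min one_pos (by positivity)
  have hε1 : ε ≤ 1 := le_trans (min_le_right _ _) (min_le_left _ _)
  have hεq : ε ≤ q0 / (2 * (α * K + 1)) := le_trans (min_le_right _ _) (min_le_right _ _)
  have hεM : ε ≤ M₀ / 2 := min_le_left _ _
  have hM₀K : M₀ ≤ K - 1 := min_le_right _ _
  have hM₀α : M₀ ≤ α * K / 2 := min_le_left _ _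
  refine ⟨M₀ - ε, by linarith, by linarith, ?_, by linarith⟩
  have hεq' : ε * (2 * (α * K + 1)) ≤ q0 :=
    (le_div_iff₀ (by positivity)).mp hεq
  nlinarith [sq_nonneg ε, mul_pos hα hK0]

set_option maxHeartbeats 1000000 in
theorem stmt_14 (h f g : ℝ → ℝ) (K α β : ℝ)
    (hh : ContDiff ℝ 1 h) (hf : ContDiff ℝ 1 f) (hg : ContDiff ℝ 1 g)
    (hK : 1 < K) (hα : 0 < α) (hβ : 0 < β)
    (hdh : ∀ x, K ≤ |deriv h x|) (hdf : ∀ x, α ≤ |deriv f x|)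
    (hgb : ∃ M, ∀ x, |g x| ≤ M) (hdg : ∀ x, |deriv g x| ≤ β)
    (hcond1 : α < 2 * (1 - 1 / K) → β < α ^ 2 * K ^ 2 / 4)
    (hcond2 : 2 * (1 - 1 / K) ≤ α → β < (K - 1) * (α * K - K + 1)) :
    ∃ φ : ℝ → ℝ, ContDiff ℝ 1 φ ∧ (∃ C, ∀ x, |deriv φ x| ≤ C) ∧
      ∀ x, φ (φ x) = h (φ (f x)) + g x := by
  obtain ⟨Mg, hMg⟩ := hgb
  have hMg0 : 0 ≤ Mg := le_trans (abs_nonneg _) (hMg 0)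
  have hK0 : (0:ℝ) < K := by linarith
  obtain ⟨hHli, hHri, hHlip, hHder, hHcont⟩ := aux_inv_pack hh hK0 hdh
  obtain ⟨hFli, hFri, hFlip, hFder, hFcont⟩ := aux_inv_pack hf hα hdf
  set Hi : ℝ → ℝ := Function.invFun h with hHidef
  set Fi : ℝ → ℝ := Function.invFun f with hFidef
  obtain ⟨M, hM0, hMK, hMq, hM2⟩ := aux_constM hK hα hβ hcond1 hcond2
  have hgdiff : Differentiable ℝ g := hg.differentiable one_ne_zero
  have hglip : ∀ a b : ℝ, |g a - g b| ≤ β * |a - b| := aux_upper_lip hgdiff hdg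
  -- bound for the iterates
  set B : ℝ := (K * |Hi 0| + Mg) / (K - 1) with hBdef
  have hB0 : 0 ≤ B := by
    apply div_nonneg _ (by linarith)
    positivity
  have hHabs : ∀ z : ℝ, |Hi z| ≤ |Hi 0| + K⁻¹ * |z| := by
    intro z
    have := hHlip z 0
    have h2 : |Hi z| - |Hi 0| ≤ |Hi z - Hi 0| := by
      exact abs_sub_abs_le_abs_sub _ _
    simp only [sub_zero] at this
    linarith
  have hBkey : |Hi 0| + K⁻¹ * (B + Mg) ≤ B := by
    have hK1 : (0:ℝ) < K - 1 := by linarith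
    rw [hBdef]
    rw [div_eq_iff hK1.ne' ] at *
    have : K⁻¹ * K = 1 := inv_mul_cancel₀ hK0.ne'
    field_simp
    nlinarith
  -- the iteration
  set W : ℕ → (ℝ → ℝ) × (ℝ → ℝ) := auxW h f g Hi Fi with hWdef
  have hW0 : W 0 = (fun _ => 0, fun _ => 0) := rfl
  have hWs : ∀ n, W (n+1) = (auxT Hi Fi g (W n).1,
      auxD h f g Hi Fi (W n).1 (W n).2) := fun n => rfl
  have hdfne : ∀ x, deriv f x ≠ 0 := by
    intro x hx; have := hdf x; rw [hx] at this; simp at this; linarith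
  have hdhne : ∀ x, deriv h x ≠ 0 := by
    intro x hx; have := hdh x; rw [hx] at this; simp at this; linarith
  have hdhinv : ∀ x, |(deriv h x)⁻¹| ≤ K⁻¹ := by
    intro x; rw [abs_inv]
    exact inv_anti₀ hK0 (hdh x)
  have hdfinv : ∀ x, |(deriv f x)⁻¹| ≤ α⁻¹ := by
    intro x; rw [abs_inv]
    exact inv_anti₀ hα (hdf x)
  have hpM : K⁻¹ * ((M * M + β) * α⁻¹) ≤ M := by
    have h1 : M * M + β ≤ M * (K * α) := by nlinarith
    have h2 : K⁻¹ * ((M * M + β) * α⁻¹) = (M * M + β) / (K * α) := by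
      field_simp
    rw [h2, div_le_iff₀ (by positivity)]
    exact h1
  -- the main inductive invariant
  have hInv : ∀ n, (∀ t, HasDerivAt ((W n).1) ((W n).2 t) t) ∧
      Continuous ((W n).2) ∧ (∀ t, |(W n).1 t| ≤ B) ∧ (∀ t, |(W n).2 t| ≤ M) := by
    intro n
    induction n with
    | zero =>
      rw [hW0]
      refine ⟨fun t => ?_, continuous_const, fun t => ?_, fun t => ?_⟩
      · exact hasDerivAt_const t 0
      · simpa using hB0
      · simpa using hM0.le
    | succ n ih =>
      obtain ⟨ihd, ihpc, ihB, ihM⟩ := ih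
      have hψd : Differentiable ℝ ((W n).1) := fun t => (ihd t).differentiableAt
      have hψc : Continuous ((W n).1) := hψd.continuous
      rw [hWs n]
      have hder : ∀ t, HasDerivAt (auxT Hi Fi g (W n).1)
          (auxD h f g Hi Fi (W n).1 (W n).2 t) t := by
        intro t
        have hF := hFder t
        have h1 : HasDerivAt (fun s => (W n).1 (Fi s))
            ((W n).2 (Fi t) * (deriv f (Fi t))⁻¹) t := (ihd (Fi t)).comp t hF
        have h2 : HasDerivAt (fun s => (W n).1 ((W n).1 (Fi s)))
            ((W n).2 ((W n).1 (Fi t)) * ((W n).2 (Fi t) * (deriv f (Fi t))⁻¹)) t :=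
          (ihd ((W n).1 (Fi t))).comp t h1
        have h3 : HasDerivAt (fun s => g (Fi s))
            (deriv g (Fi t) * (deriv f (Fi t))⁻¹) t :=
          ((hgdiff (Fi t)).hasDerivAt).comp t hF
        have h4 := h2.sub h3
        have h5 := hHder ((W n).1 ((W n).1 (Fi t)) - g (Fi t))
        have h6 : HasDerivAt (auxT Hi Fi g (W n).1)
            ((deriv h (Hi ((W n).1 ((W n).1 (Fi t)) - g (Fi t))))⁻¹ *
              ((W n).2 ((W n).1 (Fi t)) * ((W n).2 (Fi t) * (deriv f (Fi t))⁻¹) -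
                deriv g (Fi t) * (deriv f (Fi t))⁻¹)) t := h5.comp t h4
        convert h6 using 1
        simp only [auxD]
        ring
      refine ⟨hder, ?_, ?_, ?_⟩
      · -- continuity of the new derivative
        simp only [auxD]
        have hA : Continuous fun t => (W n).1 ((W n).1 (Fi t)) - g (Fi t) :=
          (hψc.comp (hψc.comp hFcont)).sub (hgdiff.continuous.comp hFcont)
        have c1 : Continuous fun t =>
            (deriv h (Hi ((W n).1 ((W n).1 (Fi t)) - g (Fi t))))⁻¹ :=
          ((hh.continuous_deriv le_rfl).comp (hHcont.comp hA)).inv₀ fun t => hdhne _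
        have c2 : Continuous fun t =>
            (W n).2 ((W n).1 (Fi t)) * (W n).2 (Fi t) - deriv g (Fi t) :=
          ((ihpc.comp (hψc.comp hFcont)).mul (ihpc.comp hFcont)).sub
            ((hg.continuous_deriv le_rfl).comp hFcont)
        have c3 : Continuous fun t => (deriv f (Fi t))⁻¹ :=
          ((hf.continuous_deriv le_rfl).comp hFcont).inv₀ fun t => hdfne _
        exact c1.mul (c2.mul c3)
      · -- bound on the new function
        intro t
        simp only [auxT]
        have hA : |(W n).1 ((W n).1 (Fi t)) - g (Fi t)| ≤ B + Mg := by
          calc |(W n).1 ((W n).1 (Fi t)) - g (Fi t)|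
              ≤ |(W n).1 ((W n).1 (Fi t))| + |g (Fi t)| := abs_sub _ _
            _ ≤ B + Mg := add_le_add (ihB _) (hMg _)
        calc |Hi ((W n).1 ((W n).1 (Fi t)) - g (Fi t))|
            ≤ |Hi 0| + K⁻¹ * |(W n).1 ((W n).1 (Fi t)) - g (Fi t)| := hHabs _
          _ ≤ |Hi 0| + K⁻¹ * (B + Mg) := by
              have : (0:ℝ) ≤ K⁻¹ := by positivity
              nlinarith
          _ ≤ B := hBkey
      · -- bound on the new derivative
        intro t
        simp only [auxD]
        have hmid : |(W n).2 ((W n).1 (Fi t)) * (W n).2 (Fi t) - deriv g (Fi t)|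
            ≤ M * M + β := by
          calc |(W n).2 ((W n).1 (Fi t)) * (W n).2 (Fi t) - deriv g (Fi t)|
              ≤ |(W n).2 ((W n).1 (Fi t)) * (W n).2 (Fi t)| + |deriv g (Fi t)| :=
                abs_sub _ _
            _ ≤ M * M + β := add_le_add (aux_abs_mul_le (ihM _) (ihM _)) (hdg _)
        calc |(deriv h (Hi ((W n).1 ((W n).1 (Fi t)) - g (Fi t))))⁻¹ *
              (((W n).2 ((W n).1 (Fi t)) * (W n).2 (Fi t) - deriv g (Fi t)) *
                (deriv f (Fi t))⁻¹)|
            ≤ K⁻¹ * ((M * M + β) * α⁻¹) :=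
              aux_abs_mul_le (hdhinv _) (aux_abs_mul_le hmid (hdfinv _))
          _ ≤ M := hpM
  -- section 2
  have hψd : ∀ n, Differentiable ℝ ((W n).1) := fun n t => ((hInv n).1 t).differentiableAt
  have hψlip : ∀ n, ∀ a b : ℝ, |(W n).1 a - (W n).1 b| ≤ M * |a - b| := by
    intro n
    apply aux_upper_lip (hψd n)
    intro t
    rw [((hInv n).1 t).deriv]
    exact (hInv n).2.2.2 t
  set θ : ℝ := (M + 1) / K with hθdef
  have hθ0 : 0 < θ := by positivity
  have hθ1 : θ < 1 := by rw [hθdef, div_lt_one hK0]; linarith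
  have hsucc : ∀ n, ∀ t, |(W (n+1)).1 t - (W n).1 t| ≤ 2 * B * θ ^ n := by
    intro n
    induction n with
    | zero =>
      intro t
      have h1 := (hInv 1).2.2.1 t
      have h2 : (W 0).1 t = 0 := by rw [hW0]
      rw [h2, sub_zero]
      simpa using by linarith
    | succ n ih =>
      intro t
      have e1 : (W (n+1+1)).1 t = Hi ((W (n+1)).1 ((W (n+1)).1 (Fi t)) - g (Fi t)) := by
        rw [hWs (n+1)]; rfl
      have e2 : (W (n+1)).1 t = Hi ((W n).1 ((W n).1 (Fi t)) - g (Fi t)) := by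
        rw [hWs n]; rfl
      rw [e1, e2]
      have h1 := hHlip ((W (n+1)).1 ((W (n+1)).1 (Fi t)) - g (Fi t))
        ((W n).1 ((W n).1 (Fi t)) - g (Fi t))
      have h2 : |((W (n+1)).1 ((W (n+1)).1 (Fi t)) - g (Fi t)) -
          ((W n).1 ((W n).1 (Fi t)) - g (Fi t))| ≤ (M + 1) * (2 * B * θ ^ n) := by
        have heq : ((W (n+1)).1 ((W (n+1)).1 (Fi t)) - g (Fi t)) -
            ((W n).1 ((W n).1 (Fi t)) - g (Fi t)) =
            ((W (n+1)).1 ((W (n+1)).1 (Fi t)) - (W (n+1)).1 ((W n).1 (Fi t))) +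
            ((W (n+1)).1 ((W n).1 (Fi t)) - (W n).1 ((W n).1 (Fi t))) := by ring
        rw [heq]
        have t1 := hψlip (n+1) ((W (n+1)).1 (Fi t)) ((W n).1 (Fi t))
        have t2 := ih ((W n).1 (Fi t))
        have t3 := ih (Fi t)
        have t4 := abs_add_le ((W (n+1)).1 ((W (n+1)).1 (Fi t)) - (W (n+1)).1 ((W n).1 (Fi t)))
          ((W (n+1)).1 ((W n).1 (Fi t)) - (W n).1 ((W n).1 (Fi t)))
        nlinarith [abs_nonneg ((W (n+1)).1 (Fi t) - (W n).1 (Fi t))]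
      calc |Hi ((W (n+1)).1 ((W (n+1)).1 (Fi t)) - g (Fi t)) -
            Hi ((W n).1 ((W n).1 (Fi t)) - g (Fi t))|
          ≤ K⁻¹ * |((W (n+1)).1 ((W (n+1)).1 (Fi t)) - g (Fi t)) -
            ((W n).1 ((W n).1 (Fi t)) - g (Fi t))| := h1
        _ ≤ K⁻¹ * ((M + 1) * (2 * B * θ ^ n)) :=
            mul_le_mul_of_nonneg_left h2 (by positivity)
        _ = 2 * B * θ ^ (n+1) := by
            rw [pow_succ, hθdef]
            ring
  have hθne : (0:ℝ) < 1 - θ := by linarith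
  have hdiffmn : ∀ m j, ∀ t, |(W (m+j)).1 t - (W m).1 t| ≤
      2 * B * θ ^ m * (1 - θ ^ j) / (1 - θ) := by
    intro m j
    induction j with
    | zero => intro t; simp
    | succ j ih =>
      intro t
      have h1 := hsucc (m+j) t
      have h2 := ih t
      have key : |(W (m+(j+1))).1 t - (W m).1 t| ≤
          |(W (m+j+1)).1 t - (W (m+j)).1 t| + |(W (m+j)).1 t - (W m).1 t| := by
        have := abs_sub_le ((W (m+j+1)).1 t) ((W (m+j)).1 t) ((W m).1 t)
        simpa [Nat.add_assoc] using this
      have harith : 2 * B * θ ^ (m+j) + 2 * B * θ ^ m * (1 - θ ^ j) / (1 - θ) =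
          2 * B * θ ^ m * (1 - θ ^ (j+1)) / (1 - θ) := by
        field_simp
        ring
      calc |(W (m+(j+1))).1 t - (W m).1 t|
          ≤ |(W (m+j+1)).1 t - (W (m+j)).1 t| + |(W (m+j)).1 t - (W m).1 t| := key
        _ ≤ 2 * B * θ ^ (m+j) + 2 * B * θ ^ m * (1 - θ ^ j) / (1 - θ) := add_le_add h1 h2
        _ = 2 * B * θ ^ m * (1 - θ ^ (j+1)) / (1 - θ) := harith
  have hcauchy : ∀ m j t, |(W (m+j)).1 t - (W m).1 t| ≤ 2 * B * θ ^ m / (1 - θ) := by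
    intro m j t
    refine le_trans (hdiffmn m j t) ?_
    have h2 : (0:ℝ) ≤ θ ^ j := by positivity
    have h3 : (0:ℝ) ≤ θ ^ m := by positivity
    rw [div_le_div_iff_of_pos_right hθne]
    nlinarith [mul_nonneg (mul_nonneg (mul_nonneg (by norm_num : (0:ℝ) ≤ 2) hB0) h3) h2]
  have hconv : ∀ t : ℝ, ∃ L, Tendsto (fun n => (W n).1 t) atTop (𝓝 L) := by
    intro t
    apply cauchySeq_tendsto_of_complete
    apply cauchySeq_of_le_geometric θ (2*B) hθ1
    intro n
    rw [Real.dist_eq, abs_sub_comm]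
    exact hsucc n t
  choose φ hφ using hconv
  have hrate : ∀ m t, |φ t - (W m).1 t| ≤ 2 * B * θ ^ m / (1 - θ) := by
    intro m t
    have h1 : Tendsto (fun j => |(W (m+j)).1 t - (W m).1 t|) atTop
        (𝓝 |φ t - (W m).1 t|) := by
      apply Filter.Tendsto.abs
      apply Filter.Tendsto.sub_const
      have := (hφ t).comp (tendsto_add_atTop_nat m)
      simpa [Function.comp_def, Nat.add_comm] using this
    exact le_of_tendsto h1 (Filter.Eventually.of_forall fun j => hcauchy m j t)
  have hφB : ∀ t, |φ t| ≤ B := fun t =>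
    le_of_tendsto (hφ t).abs (Filter.Eventually.of_forall fun n => (hInv n).2.2.1 t)
  have hφlip : ∀ a b : ℝ, |φ a - φ b| ≤ M * |a - b| := fun a b =>
    le_of_tendsto ((hφ a).sub (hφ b)).abs
      (Filter.Eventually.of_forall fun n => hψlip n a b)
  have hfeq : ∀ t, φ t = Hi (φ (φ (Fi t)) - g (Fi t)) := by
    intro t
    have h1 : Tendsto (fun n => (W (n+1)).1 t) atTop (𝓝 (φ t)) :=
      (hφ t).comp (tendsto_add_atTop_nat 1)
    have hb : ∀ n, |(W (n+1)).1 t - Hi (φ (φ (Fi t)) - g (Fi t))| ≤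
        K⁻¹ * ((M+1) * (2 * B * θ ^ n / (1 - θ))) := by
      intro n
      have e2 : (W (n+1)).1 t = Hi ((W n).1 ((W n).1 (Fi t)) - g (Fi t)) := by
        rw [hWs n]; rfl
      rw [e2]
      refine le_trans (hHlip _ _) ?_
      have inner : |((W n).1 ((W n).1 (Fi t)) - g (Fi t)) - (φ (φ (Fi t)) - g (Fi t))| ≤
          (M+1) * (2 * B * θ ^ n / (1 - θ)) := by
        have t1 := hψlip n ((W n).1 (Fi t)) (φ (Fi t))
        have t2 : |(W n).1 (φ (Fi t)) - φ (φ (Fi t))| ≤ 2 * B * θ ^ n / (1 - θ) := by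
          rw [abs_sub_comm]; exact hrate n _
        have t3 : |(W n).1 (Fi t) - φ (Fi t)| ≤ 2 * B * θ ^ n / (1 - θ) := by
          rw [abs_sub_comm]; exact hrate n _
        have heq : ((W n).1 ((W n).1 (Fi t)) - g (Fi t)) - (φ (φ (Fi t)) - g (Fi t)) =
            ((W n).1 ((W n).1 (Fi t)) - (W n).1 (φ (Fi t))) +
            ((W n).1 (φ (Fi t)) - φ (φ (Fi t))) := by ring
        rw [heq]
        have t4 := abs_add_le ((W n).1 ((W n).1 (Fi t)) - (W n).1 (φ (Fi t)))
          ((W n).1 (φ (Fi t)) - φ (φ (Fi t)))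
        nlinarith [abs_nonneg ((W n).1 (Fi t) - φ (Fi t))]
      exact mul_le_mul_of_nonneg_left inner (by positivity)
    have hz : Tendsto (fun n : ℕ => K⁻¹ * ((M+1) * (2 * B * θ ^ n / (1 - θ)))) atTop (𝓝 0) := by
      have h0 := tendsto_pow_atTop_nhds_zero_of_lt_one hθ0.le hθ1
      have h1 := h0.const_mul (K⁻¹ * ((M+1) * (2 * B / (1 - θ))))
      simp only [mul_zero] at h1
      convert h1 using 2 with n
      ring
    have h2 : Tendsto (fun n => (W (n+1)).1 t - Hi (φ (φ (Fi t)) - g (Fi t))) atTop (𝓝 0) :=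
      squeeze_zero_norm (fun n => by simpa [Real.norm_eq_abs] using hb n) hz
    have h3 := h2.add_const (Hi (φ (φ (Fi t)) - g (Fi t)))
    simp only [sub_add_cancel, zero_add] at h3
    exact tendsto_nhds_unique h1 h3
  have hfinal : ∀ x, φ (φ x) = h (φ (f x)) + g x := by
    intro x
    have h1 := hfeq (f x)
    rw [hFli x] at h1
    have h2 := congrArg h h1
    rw [hHri _] at h2
    rw [h2]; ring
  -- section 3: convergence of the derivatives
  set c : ℝ := 2 * M / (α * K) with hcdef
  have hc0 : 0 < c := by positivity
  have hc1 : c < 1 := by rw [hcdef, div_lt_one (by positivity)]; linarith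
  have h1c : 0 < 1 - c := by linarith
  have hψmem : ∀ n y, (W n).1 y ∈ Icc (-B) B := by
    intro n y
    have := abs_le.mp ((hInv n).2.2.1 y)
    exact mem_Icc.mpr this
  set hat : ℝ → ℝ := fun a => (deriv h (Hi a))⁻¹ with hhatdef
  have hhatb : ∀ a, |hat a| ≤ K⁻¹ := fun a => hdhinv _
  have hhatc : Continuous hat :=
    ((hh.continuous_deriv le_rfl).comp hHcont).inv₀ fun a => hdhne _
  set JA : Set ℝ := Icc (-(B + Mg)) (B + Mg) with hJAdef
  have hhatuc : ∀ ε > 0, ∃ δ > 0, ∀ a ∈ JA, ∀ b ∈ JA, |a - b| ≤ δ →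
      |hat a - hat b| ≤ ε := aux_ucomp hhatc isCompact_Icc
  have hAmem : ∀ n t, ((W n).1 ((W n).1 (Fi t)) - g (Fi t)) ∈ JA := by
    intro n t
    have h1 := abs_le.mp ((hInv n).2.2.1 ((W n).1 (Fi t)))
    have h2 := abs_le.mp (hMg (Fi t))
    rw [hJAdef, mem_Icc]
    constructor <;> linarith [h1.1, h1.2, h2.1, h2.2]
  have hpform : ∀ n t, (W (n+1)).2 t =
      hat ((W n).1 ((W n).1 (Fi t)) - g (Fi t)) *
        (((W n).2 ((W n).1 (Fi t)) * (W n).2 (Fi t) - deriv g (Fi t)) *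
          (deriv f (Fi t))⁻¹) := by
    intro n t
    rw [hWs n]; rfl
  -- positive auxiliary constants
  set Q1 : ℝ := (M * M + β) * α⁻¹ with hQ1def
  have hQ1 : 0 < Q1 := by positivity
  set Q2 : ℝ := K⁻¹ * α⁻¹ with hQ2def
  have hQ2 : 0 < Q2 := by positivity
  set Q3 : ℝ := K⁻¹ * (M * M + β) with hQ3def
  have hQ3 : 0 < Q3 := by positivity
  have hcQ : 2 * M * Q2 = c := by
    rw [hQ2def, hcdef]; field_simp
  -- the equicontinuity induction
  have claimP : ∀ N : ℕ, ∀ S : Set ℝ, IsCompact S → ∀ ε > 0, ∃ δ > 0, ∀ n,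
      ∀ t₁ ∈ S, ∀ t₂ ∈ S, |t₁ - t₂| ≤ δ →
      |(W n).2 t₁ - (W n).2 t₂| ≤ ε + c ^ N * (2 * M) := by
    intro N
    induction N with
    | zero =>
      intro S _ ε hε
      refine ⟨1, one_pos, fun n t₁ _ t₂ _ _ => ?_⟩
      have h1 := abs_le.mp ((hInv n).2.2.2 t₁)
      have h2 := abs_le.mp ((hInv n).2.2.2 t₂)
      have h3 : |(W n).2 t₁ - (W n).2 t₂| ≤ 2 * M :=
        abs_le.mpr ⟨by linarith, by linarith⟩
      simp only [pow_zero, one_mul]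
      linarith
    | succ N ihN =>
      intro S hS ε hε
      set S₁ : Set ℝ := (Fi '' S) ∪ Icc (-B) B with hS₁def
      have hS₁c : IsCompact S₁ := (hS.image hFcont).union isCompact_Icc
      obtain ⟨δ₁, hδ₁0, hδ₁⟩ := ihN S₁ hS₁c ε hε
      set e3 : ℝ := ε * (1 - c) / 3 with he3def
      have he3 : 0 < e3 := by positivity
      obtain ⟨δh, hδh0, hδh⟩ := hhatuc (e3 / Q1) (by positivity)
      obtain ⟨δg, hδg0, hδg⟩ := aux_ucomp ((hg.continuous_deriv le_rfl).comp hFcont)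
        hS (e3 / Q2) (by positivity)
      obtain ⟨δw, hδw0, hδw⟩ := aux_ucomp
        (((hf.continuous_deriv le_rfl).comp hFcont).inv₀ fun t => hdfne _)
        hS (e3 / Q3) (by positivity)
      set lam : ℝ := max 1 M / α with hlamdef
      have hlam0 : 0 < lam := by positivity
      have hlam1 : α⁻¹ ≤ lam := by
        rw [hlamdef, inv_eq_one_div]
        gcongr
        exact le_max_left 1 M
      have hlam2 : M * α⁻¹ ≤ lam := by
        rw [hlamdef]
        rw [show M * α⁻¹ = M / α by ring]
        gcongr
        exact le_max_right 1 M
      refine ⟨min (min (δh / Q1) (δ₁ / lam)) (min δg δw), by positivity, ?_⟩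
      intro n t₁ ht₁ t₂ ht₂ hdist
      have hd1 : |t₁ - t₂| ≤ δh / Q1 :=
        le_trans hdist (le_trans (min_le_left _ _) (min_le_left _ _))
      have hd2 : |t₁ - t₂| ≤ δ₁ / lam :=
        le_trans hdist (le_trans (min_le_left _ _) (min_le_right _ _))
      have hd3 : |t₁ - t₂| ≤ δg :=
        le_trans hdist (le_trans (min_le_right _ _) (min_le_left _ _))
      have hd4 : |t₁ - t₂| ≤ δw :=
        le_trans hdist (le_trans (min_le_right _ _) (min_le_right _ _))
      cases n with
      | zero =>
        rw [hW0]
        show |(0:ℝ) - (0:ℝ)| ≤ ε + c ^ (N+1) * (2 * M)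
        simpa using (by positivity : (0:ℝ) ≤ ε + c ^ (N+1) * (2 * M))
      | succ n =>
        rw [hpform n t₁, hpform n t₂]
        set y₁ : ℝ := Fi t₁ with hy₁def
        set y₂ : ℝ := Fi t₂ with hy₂def
        have hdy : |y₁ - y₂| ≤ α⁻¹ * |t₁ - t₂| := hFlip t₁ t₂
        have hdψy : |(W n).1 y₁ - (W n).1 y₂| ≤ M * |y₁ - y₂| := hψlip n _ _
        -- difference of the arguments of hat
        have hdA : |((W n).1 ((W n).1 y₁) - g y₁) - ((W n).1 ((W n).1 y₂) - g y₂)| ≤ δh := by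
          have t1 : |(W n).1 ((W n).1 y₁) - (W n).1 ((W n).1 y₂)| ≤
              M * |(W n).1 y₁ - (W n).1 y₂| := hψlip n _ _
          have t2 : |g y₁ - g y₂| ≤ β * |y₁ - y₂| := hglip y₁ y₂
          have t3 := abs_sub_le ((W n).1 ((W n).1 y₁) - g y₁)
            ((W n).1 ((W n).1 y₂) - g y₁) ((W n).1 ((W n).1 y₂) - g y₂)
          have e0 : ((W n).1 ((W n).1 y₁) - g y₁) - ((W n).1 ((W n).1 y₂) - g y₁) =
              (W n).1 ((W n).1 y₁) - (W n).1 ((W n).1 y₂) := by ring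
          have e1 : ((W n).1 ((W n).1 y₂) - g y₁) - ((W n).1 ((W n).1 y₂) - g y₂) =
              -(g y₁ - g y₂) := by ring
          rw [e0, e1, abs_neg] at t3
          have t4 : M * |(W n).1 y₁ - (W n).1 y₂| ≤ M * (M * |y₁ - y₂|) :=
            mul_le_mul_of_nonneg_left hdψy hM0.le
          have t5 : M * (M * |y₁ - y₂|) + β * |y₁ - y₂| = (M * M + β) * |y₁ - y₂| := by ring
          have t6 : (M * M + β) * |y₁ - y₂| ≤ (M * M + β) * (α⁻¹ * |t₁ - t₂|) :=
            mul_le_mul_of_nonneg_left hdy (by positivity)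
          have t7 : (M * M + β) * (α⁻¹ * |t₁ - t₂|) = Q1 * |t₁ - t₂| := by
            rw [hQ1def]; ring
          have t8 : Q1 * |t₁ - t₂| ≤ Q1 * (δh / Q1) :=
            mul_le_mul_of_nonneg_left hd1 hQ1.le
          have t9 : Q1 * (δh / Q1) = δh := by field_simp
          linarith
        -- membership for the inductive bound
        have hy₁S : y₁ ∈ S₁ := Or.inl ⟨t₁, ht₁, rfl⟩
        have hy₂S : y₂ ∈ S₁ := Or.inl ⟨t₂, ht₂, rfl⟩
        have hψy₁S : (W n).1 y₁ ∈ S₁ := Or.inr (hψmem n y₁)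
        have hψy₂S : (W n).1 y₂ ∈ S₁ := Or.inr (hψmem n y₂)
        have hlamδ : lam * (δ₁ / lam) = δ₁ := by field_simp
        have hdyδ : |y₁ - y₂| ≤ δ₁ := by
          have h1 : α⁻¹ * |t₁ - t₂| ≤ lam * (δ₁ / lam) :=
            mul_le_mul hlam1 hd2 (abs_nonneg _) hlam0.le
          linarith
        have hdψyδ : |(W n).1 y₁ - (W n).1 y₂| ≤ δ₁ := by
          have h1 : M * |y₁ - y₂| ≤ (M * α⁻¹) * |t₁ - t₂| := by
            have := mul_le_mul_of_nonneg_left hdy hM0.le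
            linarith [this, (by ring : M * (α⁻¹ * |t₁ - t₂|) = (M * α⁻¹) * |t₁ - t₂|)]
          have h2 : (M * α⁻¹) * |t₁ - t₂| ≤ lam * (δ₁ / lam) :=
            mul_le_mul hlam2 hd2 (abs_nonneg _) hlam0.le
          linarith
        set η : ℝ := ε + c ^ N * (2 * M) with hηdef
        have hη0 : 0 ≤ η := by positivity
        have osc1 : |(W n).2 y₁ - (W n).2 y₂| ≤ η := hδ₁ n y₁ hy₁S y₂ hy₂S hdyδ
        have osc2 : |(W n).2 ((W n).1 y₁) - (W n).2 ((W n).1 y₂)| ≤ η :=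
          hδ₁ n ((W n).1 y₁) hψy₁S ((W n).1 y₂) hψy₂S hdψyδ
        -- difference of the products
        have hdP : |(W n).2 ((W n).1 y₁) * (W n).2 y₁ -
            (W n).2 ((W n).1 y₂) * (W n).2 y₂| ≤ 2 * M * η := by
          have key : (W n).2 ((W n).1 y₁) * (W n).2 y₁ - (W n).2 ((W n).1 y₂) * (W n).2 y₂ =
              (W n).2 ((W n).1 y₁) * ((W n).2 y₁ - (W n).2 y₂) +
              (W n).2 y₂ * ((W n).2 ((W n).1 y₁) - (W n).2 ((W n).1 y₂)) := by ring
          rw [key]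
          have b1 : |(W n).2 ((W n).1 y₁) * ((W n).2 y₁ - (W n).2 y₂)| ≤ M * η :=
            aux_abs_mul_le ((hInv n).2.2.2 _) osc1
          have b2 : |(W n).2 y₂ * ((W n).2 ((W n).1 y₁) - (W n).2 ((W n).1 y₂))| ≤ M * η :=
            aux_abs_mul_le ((hInv n).2.2.2 _) osc2
          have := abs_add_le ((W n).2 ((W n).1 y₁) * ((W n).2 y₁ - (W n).2 y₂))
            ((W n).2 y₂ * ((W n).2 ((W n).1 y₁) - (W n).2 ((W n).1 y₂)))
          linarith
        -- difference of the middle factors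
        have hG : |deriv g y₁ - deriv g y₂| ≤ e3 / Q2 := hδg t₁ ht₁ t₂ ht₂ hd3
        have hdu : |((W n).2 ((W n).1 y₁) * (W n).2 y₁ - deriv g y₁) -
            ((W n).2 ((W n).1 y₂) * (W n).2 y₂ - deriv g y₂)| ≤ 2 * M * η + e3 / Q2 := by
          have key : ((W n).2 ((W n).1 y₁) * (W n).2 y₁ - deriv g y₁) -
              ((W n).2 ((W n).1 y₂) * (W n).2 y₂ - deriv g y₂) =
              ((W n).2 ((W n).1 y₁) * (W n).2 y₁ -
                (W n).2 ((W n).1 y₂) * (W n).2 y₂) + (-(deriv g y₁ - deriv g y₂)) := by ring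
          rw [key]
          have := abs_add_le ((W n).2 ((W n).1 y₁) * (W n).2 y₁ -
            (W n).2 ((W n).1 y₂) * (W n).2 y₂) (-(deriv g y₁ - deriv g y₂))
          rw [abs_neg] at this
          clear_value e3 c Q2 η
          linarith
        -- bounds on factors
        have hu1 : |(W n).2 ((W n).1 y₁) * (W n).2 y₁ - deriv g y₁| ≤ M * M + β := by
          have := abs_sub ((W n).2 ((W n).1 y₁) * (W n).2 y₁) (deriv g y₁)
          have b1 := aux_abs_mul_le ((hInv n).2.2.2 ((W n).1 y₁)) ((hInv n).2.2.2 y₁)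
          linarith [hdg y₁]
        have hu2 : |(W n).2 ((W n).1 y₂) * (W n).2 y₂ - deriv g y₂| ≤ M * M + β := by
          have := abs_sub ((W n).2 ((W n).1 y₂) * (W n).2 y₂) (deriv g y₂)
          have b1 := aux_abs_mul_le ((hInv n).2.2.2 ((W n).1 y₂)) ((hInv n).2.2.2 y₂)
          linarith [hdg y₂]
        have hw1 : |(deriv f y₁)⁻¹| ≤ α⁻¹ := hdfinv _
        have hdw : |(deriv f y₁)⁻¹ - (deriv f y₂)⁻¹| ≤ e3 / Q3 := hδw t₁ ht₁ t₂ ht₂ hd4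
        have hhd : |hat ((W n).1 ((W n).1 y₁) - g y₁) -
            hat ((W n).1 ((W n).1 y₂) - g y₂)| ≤ e3 / Q1 :=
          hδh _ (hAmem n t₁) _ (hAmem n t₂) hdA
        have main := aux_prod3 (hhatb _) hu1 hu2 hw1 hhd hdu hdw
        -- final arithmetic
        have id1 : e3 / Q1 * ((M * M + β) * α⁻¹) = e3 := by
          rw [← hQ1def, div_mul_cancel₀ _ hQ1.ne']
        have id2 : K⁻¹ * ((2 * M * η + e3 / Q2) * α⁻¹) = c * η + e3 := by
          have h1 : e3 / Q2 * Q2 = e3 := div_mul_cancel₀ _ hQ2.ne'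
          have h2 : K⁻¹ * ((2 * M * η + e3 / Q2) * α⁻¹) =
              (2 * M * Q2) * η + e3 / Q2 * Q2 := by rw [hQ2def]; ring
          rw [h2, h1, hcQ]
        have id3 : K⁻¹ * ((M * M + β) * (e3 / Q3)) = e3 := by
          have h2 : K⁻¹ * ((M * M + β) * (e3 / Q3)) = e3 / Q3 * Q3 := by
            rw [hQ3def]; ring
          rw [h2, div_mul_cancel₀ _ hQ3.ne']
        have hsum : 3 * e3 + c * η = ε + c ^ (N + 1) * (2 * M) := by
          rw [he3def, hηdef, pow_succ]; ring
        clear_value e3 c Q1 Q2 Q3 η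
        linarith
  -- equicontinuity on the central compact
  have hEC : ∀ ε > 0, ∃ δ > 0, ∀ n, ∀ s₁ ∈ Icc (-B) B, ∀ s₂ ∈ Icc (-B) B,
      |s₁ - s₂| ≤ δ → |(W n).2 s₁ - (W n).2 s₂| ≤ ε := by
    intro ε hε
    obtain ⟨N, hN⟩ := exists_pow_lt_of_lt_one
      (show (0:ℝ) < ε/2/(2*M) by positivity) hc1
    obtain ⟨δ, hδ0, hδ⟩ := claimP N (Icc (-B) B) isCompact_Icc (ε/2) (by positivity)
    refine ⟨δ, hδ0, fun n s₁ h₁ s₂ h₂ hd => ?_⟩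
    have h1 := hδ n s₁ h₁ s₂ h₂ hd
    have h2 : c ^ N * (2*M) < ε/2 := (lt_div_iff₀ (by positivity)).mp hN
    linarith
  have hψsup : ∀ m n, m ≤ n → ∀ t, |(W n).1 t - (W m).1 t| ≤ 2*B*θ^m/(1-θ) := by
    intro m n hmn t
    obtain ⟨j, rfl⟩ := Nat.exists_eq_add_of_le hmn
    exact hcauchy m j t
  set CΓ : ℝ := (M+1) * (2*B/(1-θ)) with hCΓdef
  have hCΓ0 : 0 ≤ CΓ := by positivity
  have h2B : ∀ m : ℕ, 2*B*θ^m/(1-θ) ≤ CΓ*θ^m := by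
    intro m
    have h0 : (0:ℝ) ≤ 2*B/(1-θ)*θ^m := by positivity
    have h1 : CΓ*θ^m - 2*B*θ^m/(1-θ) = M*(2*B/(1-θ)*θ^m) := by
      rw [hCΓdef]; field_simp; ring
    have h2 := mul_nonneg hM0.le h0
    linarith
  have hAdiff : ∀ m n, m ≤ n → ∀ t,
      |((W n).1 ((W n).1 (Fi t)) - g (Fi t)) - ((W m).1 ((W m).1 (Fi t)) - g (Fi t))| ≤
      CΓ * θ^m := by
    intro m n hmn t
    have t1 : |(W n).1 ((W n).1 (Fi t)) - (W n).1 ((W m).1 (Fi t))| ≤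
        M * |(W n).1 (Fi t) - (W m).1 (Fi t)| := hψlip n _ _
    have t2 : |(W n).1 ((W m).1 (Fi t)) - (W m).1 ((W m).1 (Fi t))| ≤
        2*B*θ^m/(1-θ) := hψsup m n hmn _
    have t3 : |(W n).1 (Fi t) - (W m).1 (Fi t)| ≤ 2*B*θ^m/(1-θ) := hψsup m n hmn _
    have t4 := abs_sub_le ((W n).1 ((W n).1 (Fi t))) ((W n).1 ((W m).1 (Fi t)))
      ((W m).1 ((W m).1 (Fi t)))
    have e0 : ((W n).1 ((W n).1 (Fi t)) - g (Fi t)) -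
        ((W m).1 ((W m).1 (Fi t)) - g (Fi t)) =
        (W n).1 ((W n).1 (Fi t)) - (W m).1 ((W m).1 (Fi t)) := by ring
    rw [e0]
    have t5 : M * |(W n).1 (Fi t) - (W m).1 (Fi t)| ≤ M * (2*B*θ^m/(1-θ)) :=
      mul_le_mul_of_nonneg_left t3 hM0.le
    have t6 : M * (2*B*θ^m/(1-θ)) + 2*B*θ^m/(1-θ) = CΓ*θ^m := by
      rw [hCΓdef]; field_simp
    linarith
  have hΓ0 : Tendsto (fun m : ℕ => CΓ * θ^m) atTop (𝓝 0) := by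
    have h0 := tendsto_pow_atTop_nhds_zero_of_lt_one hθ0.le hθ1
    simpa using h0.const_mul CΓ
  -- uniform Cauchy property of the derivatives
  have hPCauchy : ∀ ε > 0, ∃ m₀ : ℕ, ∀ m, m₀ ≤ m → ∀ n, m ≤ n → ∀ t,
      |(W n).2 t - (W m).2 t| ≤ ε := by
    intro ε hε
    set e2 : ℝ := (1 - c) * ε / 2 with he2def
    have he2 : 0 < e2 := by positivity
    obtain ⟨δh, hδh0, hδh⟩ := hhatuc (e2/2 / Q1) (by positivity)
    have hMQ2 : 0 < M * Q2 := by positivity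
    obtain ⟨δE, hδE0, hδE⟩ := hEC (e2/2 / (M * Q2)) (by positivity)
    obtain ⟨m₁, hm₁⟩ : ∃ m₁ : ℕ, ∀ m, m₁ ≤ m → CΓ * θ^m ≤ min δh δE := by
      obtain ⟨N, hN⟩ := (Metric.tendsto_atTop.mp hΓ0) (min δh δE) (lt_min hδh0 hδE0)
      refine ⟨N, fun m hm => ?_⟩
      have := hN m hm
      rw [Real.dist_eq, sub_zero] at this
      exact le_trans (le_abs_self _) this.le
    have hstep : ∀ m, m₁ ≤ m → ∀ E, 0 ≤ E →
        (∀ n, m ≤ n → ∀ t, |(W n).2 t - (W m).2 t| ≤ E) →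
        ∀ n, m + 1 ≤ n → ∀ t, |(W n).2 t - (W (m+1)).2 t| ≤ c * E + e2 := by
      intro m hm E hE0 hE n hn t
      obtain ⟨n', rfl⟩ : ∃ n', n = n' + 1 := ⟨n - 1, by omega⟩
      have hn' : m ≤ n' := by omega
      rw [hpform n' t, hpform m t]
      set y : ℝ := Fi t with hydef
      have hhd : |hat ((W n').1 ((W n').1 y) - g y) -
          hat ((W m).1 ((W m).1 y) - g y)| ≤ e2/2 / Q1 := by
        apply hδh _ (hAmem n' t) _ (hAmem m t)
        exact le_trans (hAdiff m n' hn' t) (le_trans (hm₁ m hm) (min_le_left _ _))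
      have hψyd : |(W n').1 y - (W m).1 y| ≤ δE :=
        le_trans (hψsup m n' hn' y)
          (le_trans (h2B m) (le_trans (hm₁ m hm) (min_le_right _ _)))
      have oscm : |(W m).2 ((W n').1 y) - (W m).2 ((W m).1 y)| ≤ e2/2/(M*Q2) :=
        hδE m _ (hψmem n' y) _ (hψmem m y) hψyd
      have hpn : |(W n').2 y - (W m).2 y| ≤ E := hE n' hn' y
      have hpψ : |(W n').2 ((W n').1 y) - (W m).2 ((W m).1 y)| ≤ E + e2/2/(M*Q2) := by
        have a1 : |(W n').2 ((W n').1 y) - (W m).2 ((W n').1 y)| ≤ E := hE n' hn' _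
        have a2 := abs_sub_le ((W n').2 ((W n').1 y)) ((W m).2 ((W n').1 y))
          ((W m).2 ((W m).1 y))
        linarith
      have hdP : |(W n').2 ((W n').1 y) * (W n').2 y -
          (W m).2 ((W m).1 y) * (W m).2 y| ≤ M * E + M * (E + e2/2/(M*Q2)) := by
        have key : (W n').2 ((W n').1 y) * (W n').2 y -
            (W m).2 ((W m).1 y) * (W m).2 y =
            (W n').2 ((W n').1 y) * ((W n').2 y - (W m).2 y) +
            (W m).2 y * ((W n').2 ((W n').1 y) - (W m).2 ((W m).1 y)) := by ring
        rw [key]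
        have b1 : |(W n').2 ((W n').1 y) * ((W n').2 y - (W m).2 y)| ≤ M * E :=
          aux_abs_mul_le ((hInv n').2.2.2 _) hpn
        have b2 : |(W m).2 y * ((W n').2 ((W n').1 y) - (W m).2 ((W m).1 y))| ≤
            M * (E + e2/2/(M*Q2)) := aux_abs_mul_le ((hInv m).2.2.2 _) hpψ
        have := abs_add_le ((W n').2 ((W n').1 y) * ((W n').2 y - (W m).2 y))
          ((W m).2 y * ((W n').2 ((W n').1 y) - (W m).2 ((W m).1 y)))
        linarith
      have hdu : |((W n').2 ((W n').1 y) * (W n').2 y - deriv g y) -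
          ((W m).2 ((W m).1 y) * (W m).2 y - deriv g y)| ≤
          M * E + M * (E + e2/2/(M*Q2)) := by
        have e0 : ((W n').2 ((W n').1 y) * (W n').2 y - deriv g y) -
            ((W m).2 ((W m).1 y) * (W m).2 y - deriv g y) =
            (W n').2 ((W n').1 y) * (W n').2 y - (W m).2 ((W m).1 y) * (W m).2 y := by
          ring
        rw [e0]; exact hdP
      have hu1 : |(W n').2 ((W n').1 y) * (W n').2 y - deriv g y| ≤ M * M + β := by
        have := abs_sub ((W n').2 ((W n').1 y) * (W n').2 y) (deriv g y)
        have b1 := aux_abs_mul_le ((hInv n').2.2.2 ((W n').1 y)) ((hInv n').2.2.2 y)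
        linarith [hdg y]
      have hu2 : |(W m).2 ((W m).1 y) * (W m).2 y - deriv g y| ≤ M * M + β := by
        have := abs_sub ((W m).2 ((W m).1 y) * (W m).2 y) (deriv g y)
        have b1 := aux_abs_mul_le ((hInv m).2.2.2 ((W m).1 y)) ((hInv m).2.2.2 y)
        linarith [hdg y]
      have hdw : |(deriv f y)⁻¹ - (deriv f y)⁻¹| ≤ (0:ℝ) := by simp
      have main := aux_prod3 (hhatb _) hu1 hu2 (hdfinv y) hhd hdu hdw
      have id1 : e2/2/Q1 * ((M*M+β) * α⁻¹) = e2/2 := by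
        rw [← hQ1def, div_mul_cancel₀ _ hQ1.ne']
      have id2 : K⁻¹ * ((M * E + M * (E + e2/2/(M*Q2))) * α⁻¹) = c*E + e2/2 := by
        have ha : K⁻¹ * ((M * E + M * (E + e2/2/(M*Q2))) * α⁻¹) =
            (2*M*Q2)*E + (e2/2/(M*Q2))*(M*Q2) := by rw [hQ2def]; ring
        rw [ha, div_mul_cancel₀ _ hMQ2.ne', hcQ]
      have id3 : K⁻¹ * ((M*M+β) * (0:ℝ)) = 0 := by ring
      clear_value e2 c Q1 Q2
      linarith
    have hiter : ∀ j, ∀ n, m₁ + j ≤ n → ∀ t,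
        |(W n).2 t - (W (m₁+j)).2 t| ≤ c^j * (2*M) + ε/2 := by
      intro j
      induction j with
      | zero =>
        intro n hn t
        have h1 := abs_le.mp ((hInv n).2.2.2 t)
        have h2 := abs_le.mp ((hInv (m₁+0)).2.2.2 t)
        have h3 : |(W n).2 t - (W (m₁+0)).2 t| ≤ 2*M :=
          abs_le.mpr ⟨by linarith, by linarith⟩
        simp only [pow_zero, one_mul]
        linarith
      | succ j ih =>
        intro n hn t
        have hstep' := hstep (m₁+j) (by omega) (c^j*(2*M) + ε/2) (by positivity)
          ih n (by omega) t
        have harith : c*(c^j*(2*M) + ε/2) + e2 = c^(j+1)*(2*M) + ε/2 := by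
          rw [he2def, pow_succ]; ring
        have hidx : m₁ + (j+1) = (m₁ + j) + 1 := rfl
        rw [hidx]
        linarith
    obtain ⟨j₀, hj₀⟩ := exists_pow_lt_of_lt_one
      (show (0:ℝ) < ε/2/(2*M) by positivity) hc1
    refine ⟨m₁ + j₀, fun m hm n hn t => ?_⟩
    obtain ⟨j, rfl⟩ := Nat.exists_eq_add_of_le (show m₁ ≤ m by omega)
    have hj : j₀ ≤ j := by omega
    have h1 := hiter j n hn t
    have h2 : c^j ≤ c^j₀ := pow_le_pow_of_le_one hc0.le hc1.le hj
    have h3 : c^j₀*(2*M) < ε/2 := (lt_div_iff₀ (by positivity)).mp hj₀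
    have h4 : c^j*(2*M) ≤ c^j₀*(2*M) := by nlinarith
    linarith
  -- the limit of the derivatives
  have hqconv : ∀ t : ℝ, ∃ L, Tendsto (fun n => (W n).2 t) atTop (𝓝 L) := by
    intro t
    apply cauchySeq_tendsto_of_complete
    rw [Metric.cauchySeq_iff']
    intro ε hε
    obtain ⟨m₀, hm₀⟩ := hPCauchy (ε/2) (by positivity)
    refine ⟨m₀, fun n hn => ?_⟩
    rw [Real.dist_eq]
    have := hm₀ m₀ le_rfl n hn t
    linarith
  choose q hq using hqconv
  have hqunif : TendstoUniformly (fun n t => (W n).2 t) q atTop := by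
    rw [← tendstoUniformlyOn_univ, Metric.tendstoUniformlyOn_iff]
    intro ε hε
    obtain ⟨m₀, hm₀⟩ := hPCauchy (ε/2) (by positivity)
    filter_upwards [eventually_ge_atTop m₀] with n hn
    intro t _
    have h1 : Tendsto (fun k => |(W k).2 t - (W n).2 t|) atTop
        (𝓝 |q t - (W n).2 t|) := ((hq t).sub_const _).abs
    have h2 : |q t - (W n).2 t| ≤ ε/2 := by
      refine le_of_tendsto h1 ?_
      filter_upwards [eventually_ge_atTop n] with k hk
      exact hm₀ n hn k hk t
    rw [Real.dist_eq]
    linarith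
  have hqd : ∀ t, HasDerivAt φ (q t) t := by
    intro t
    exact hasDerivAt_of_tendstoUniformlyOn isOpen_univ
      (tendstoUniformlyOn_univ.mpr hqunif)
      (Filter.Eventually.of_forall fun n x _ => (hInv n).1 x)
      (fun x _ => hφ x) (mem_univ t)
  have hqcont : Continuous q :=
    hqunif.continuous (Filter.Eventually.of_forall fun n => (hInv n).2.1).frequently
  have hqM : ∀ t, |q t| ≤ M := fun t =>
    le_of_tendsto (hq t).abs (Filter.Eventually.of_forall fun n => (hInv n).2.2.2 t)
  have hderiv : deriv φ = q := funext fun t => (hqd t).deriv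
  refine ⟨φ, ?_, ⟨M, ?_⟩, hfinal⟩
  · rw [contDiff_one_iff_deriv]
    exact ⟨fun t => (hqd t).differentiableAt, by rw [hderiv]; exact hqcont⟩
  · intro x
    rw [hderiv]
    exact hqM x
end

section
/- There exists a C¹ function φ: ℝ → ℝ with bounded derivative such that φ(φ(x)) = sin(φ(eˣ + 5x)) + 4·φ(eˣ + 5x) + cos x for all x ∈ ℝ. -/
open Real Filter Topology

noncomputable section

namespace Stmt16

def f (x : ℝ) : ℝ := Real.exp x + 5 * x

lemma f_expand {x y : ℝ} (h : x ≤ y) : 5 * (y - x) ≤ f y - f x := by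
  have := Real.exp_le_exp.2 h
  simp only [f]; nlinarith

lemma f_strictMono : StrictMono f := fun x y h => by
  have := f_expand h.le; nlinarith [h]

lemma f_cont : Continuous f := by
  exact (Real.continuous_exp.add (continuous_const.mul continuous_id))

lemma f_surj : Function.Surjective f := by
  apply f_cont.surjective
  · exact Tendsto.atTop_add_atTop Real.tendsto_exp_atTop
      (Tendsto.const_mul_atTop (by norm_num : (0:ℝ) < 5) tendsto_id)
  · apply tendsto_atBot_mono' atBot (f₁ := fun x : ℝ => 1 + 5 * x)
    · filter_upwards [Filter.eventually_le_atBot (0:ℝ)] with x hx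
      have h1 : Real.exp x ≤ 1 := Real.exp_le_one_iff.2 hx
      simp only [f]
      linarith
    · exact tendsto_atBot_add_const_left atBot 1
        (Tendsto.const_mul_atBot (by norm_num : (0:ℝ) < 5) tendsto_id)

def finv : ℝ → ℝ := Function.invFun f

lemma finv_right (y : ℝ) : f (finv y) = y := Function.rightInverse_invFun f_surj y

lemma finv_left (x : ℝ) : finv (f x) = x := Function.leftInverse_invFun f_strictMono.injective x

lemma finv_lip (a b : ℝ) : |finv a - finv b| ≤ |a - b| / 5 := by
  have key : ∀ u v : ℝ, finv u ≤ finv v → |finv u - finv v| ≤ |u - v| / 5 := by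
    intro u v h
    have h2 := f_expand h
    rw [finv_right, finv_right] at h2
    have h3 : v - u ≤ |u - v| := by rw [abs_sub_comm]; exact le_abs_self _
    rw [abs_sub_comm, abs_of_nonneg (by linarith)]
    linarith
  rcases le_total (finv a) (finv b) with h | h
  · exact key a b h
  · rw [abs_sub_comm, abs_sub_comm a b]; exact key b a h

lemma finv_cont : Continuous finv := by
  have : LipschitzWith 1 finv := by
    apply LipschitzWith.of_dist_le_mul
    intro a b
    rw [Real.dist_eq, Real.dist_eq]
    have := finv_lip a b
    have := abs_nonneg (a - b)
    push_cast
    linarith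
  exact this.continuous

lemma hasDerivAt_f (x : ℝ) : HasDerivAt f (Real.exp x + 5) x := by
  have h := (Real.hasDerivAt_exp x).add ((hasDerivAt_id x).const_mul 5)
  simp only [mul_one] at h; exact h

def F' (y : ℝ) : ℝ := (Real.exp (finv y) + 5)⁻¹

lemma F'_pos (y : ℝ) : 0 < F' y := by
  have := Real.exp_pos (finv y)
  simp only [F']
  positivity

lemma F'_le (y : ℝ) : F' y ≤ 1 / 5 := by
  have h := Real.exp_pos (finv y)
  rw [F', inv_le_comm₀ (by linarith) (by norm_num)]
  norm_num; linarith

lemma F'_abs_le (y : ℝ) : |F' y| ≤ 1 / 5 := by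
  rw [abs_of_pos (F'_pos y)]; exact F'_le y

lemma hasDerivAt_finv (y : ℝ) : HasDerivAt finv (F' y) y := by
  exact HasDerivAt.of_local_left_inverse finv_cont.continuousAt
    (hasDerivAt_f (finv y)) (by have := Real.exp_pos (finv y); positivity)
    (Filter.Eventually.of_forall finv_right)

lemma F'_lip (a b : ℝ) : |F' a - F' b| ≤ |a - b| / 25 := by
  have key : ∀ u v : ℝ, u ≤ v →
      0 ≤ (Real.exp u + 5)⁻¹ - (Real.exp v + 5)⁻¹ ∧
      (Real.exp u + 5)⁻¹ - (Real.exp v + 5)⁻¹ ≤ (v - u) / 5 := by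
    intro u v h
    have hA : (0:ℝ) < Real.exp u := Real.exp_pos u
    have hB : (0:ℝ) < Real.exp v := Real.exp_pos v
    have hAB : Real.exp u ≤ Real.exp v := Real.exp_le_exp.2 h
    have hgrow : Real.exp v - Real.exp u ≤ (v - u) * Real.exp v := by
      have h1 := Real.add_one_le_exp (u - v)
      have h2 : Real.exp u = Real.exp v * Real.exp (u - v) := by
        rw [← Real.exp_add]; ring_nf
      nlinarith [Real.exp_pos (u - v)]
    have heq : (Real.exp u + 5)⁻¹ - (Real.exp v + 5)⁻¹
        = (Real.exp v - Real.exp u) / ((Real.exp u + 5) * (Real.exp v + 5)) := by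
      field_simp
      ring
    constructor
    · rw [heq]; exact div_nonneg (by linarith) (by positivity)
    · rw [heq, div_le_div_iff₀ (by positivity) (by norm_num)]
      nlinarith
  have hflip := finv_lip a b
  rcases le_total (finv a) (finv b) with h | h
  · obtain ⟨h1, h2⟩ := key _ _ h
    have habs : |finv a - finv b| = finv b - finv a := by
      rw [abs_sub_comm, abs_of_nonneg (by linarith)]
    rw [F', F', abs_of_nonneg h1]
    rw [habs] at hflip
    linarith
  · obtain ⟨h1, h2⟩ := key _ _ h
    have habs : |finv a - finv b| = finv a - finv b := abs_of_nonneg (by linarith)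
    rw [F', F', abs_sub_comm, abs_of_nonneg h1]
    rw [habs] at hflip
    linarith

lemma sin_lip (a b : ℝ) : |Real.sin a - Real.sin b| ≤ |a - b| := by
  rw [Real.sin_sub_sin, abs_mul, abs_mul, abs_two]
  have h1 := Real.abs_sin_le_abs (x := (a - b) / 2)
  have h2 := Real.abs_cos_le_one ((a + b) / 2)
  have h3 : |(a - b) / 2| = |a - b| / 2 := by rw [abs_div, abs_two]
  nlinarith [abs_nonneg (Real.sin ((a - b) / 2)), abs_nonneg (a - b),
    abs_nonneg (Real.cos ((a + b) / 2))]

lemma cos_lip (a b : ℝ) : |Real.cos a - Real.cos b| ≤ |a - b| := by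
  rw [Real.cos_sub_cos, abs_mul, abs_mul]
  have hn : |(-2 : ℝ)| = 2 := by norm_num
  rw [hn]
  have h1 := Real.abs_sin_le_abs (x := (a - b) / 2)
  have h2 := Real.abs_sin_le_one ((a + b) / 2)
  have h3 : |(a - b) / 2| = |a - b| / 2 := by rw [abs_div, abs_two]
  nlinarith [abs_nonneg (Real.sin ((a - b) / 2)), abs_nonneg (a - b),
    abs_nonneg (Real.sin ((a + b) / 2))]


lemma abs_mul_le {x y X Y : ℝ} (hx : |x| ≤ X) (hy : |y| ≤ Y) : |x * y| ≤ X * Y := by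
  rw [abs_mul]
  exact mul_le_mul hx hy (abs_nonneg _) ((abs_nonneg x).trans hx)

lemma mul_diff {x y x' y' : ℝ} : |x * y - x' * y'| ≤ |x - x'| * |y| + |x'| * |y - y'| := by
  have h : x * y - x' * y' = (x - x') * y + x' * (y - y') := by ring
  rw [h]
  exact (abs_add_le _ _).trans (by rw [abs_mul, abs_mul])

lemma mul_diff_le {x y x' y' X Y dx dy : ℝ} (hx' : |x'| ≤ X) (hy : |y| ≤ Y)
    (hdx : |x - x'| ≤ dx) (hdy : |y - y'| ≤ dy) : |x * y - x' * y'| ≤ dx * Y + X * dy :=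
  mul_diff.trans (add_le_add (mul_le_mul hdx hy (abs_nonneg _) ((abs_nonneg _).trans hdx))
    (mul_le_mul hx' hdy (abs_nonneg _) ((abs_nonneg _).trans hx')))

def seq : ℕ → (ℝ → ℝ) × (ℝ → ℝ)
  | 0 => (fun _ => 0, fun _ => 0)
  | n + 1 =>
    ((fun y => ((seq n).1 ((seq n).1 (finv y)) - Real.sin ((seq n).1 y)
        - Real.cos (finv y)) / 4),
     (fun y => ((seq n).2 ((seq n).1 (finv y)) * (seq n).2 (finv y) * F' y
        - Real.cos ((seq n).1 y) * (seq n).2 y + Real.sin (finv y) * F' y) / 4))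

def P (n : ℕ) : ℝ → ℝ := (seq n).1
def Q (n : ℕ) : ℝ → ℝ := (seq n).2

lemma P_zero (y : ℝ) : P 0 y = 0 := rfl
lemma Q_zero (y : ℝ) : Q 0 y = 0 := rfl

lemma P_succ (n : ℕ) (y : ℝ) :
    P (n + 1) y = (P n (P n (finv y)) - Real.sin (P n y) - Real.cos (finv y)) / 4 := rfl

lemma Q_succ (n : ℕ) (y : ℝ) :
    Q (n + 1) y = (Q n (P n (finv y)) * Q n (finv y) * F' y
      - Real.cos (P n y) * Q n y + Real.sin (finv y) * F' y) / 4 := rfl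

lemma P_succ_fun (n : ℕ) :
    P (n + 1) = fun y => (P n (P n (finv y)) - Real.sin (P n y) - Real.cos (finv y)) / 4 := rfl

lemma invariant : ∀ n : ℕ, (∀ y, |P n y| ≤ 1) ∧ (∀ y, |Q n y| ≤ 1) ∧
    (∀ a b, |P n a - P n b| ≤ |a - b|) ∧ (∀ a b, |Q n a - Q n b| ≤ |a - b|) ∧
    (∀ y, HasDerivAt (P n) (Q n y) y) := by
  intro n
  induction n with
  | zero =>
    exact ⟨fun y => by simp [P_zero], fun y => by simp [Q_zero], fun a b => by simp [P_zero],
      fun a b => by simp [Q_zero], fun y => hasDerivAt_const y 0⟩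
  | succ n IH =>
    obtain ⟨hPb, hQb, hPl, hQl, hD⟩ := IH
    refine ⟨?_, ?_, ?_, ?_, ?_⟩
    · -- bound on P (n+1)
      intro y
      have h1 := abs_le.1 (hPb (P n (finv y)))
      have h2 := abs_le.1 (Real.abs_sin_le_one (P n y))
      have h3 := abs_le.1 (Real.abs_cos_le_one (finv y))
      rw [P_succ, abs_le]
      constructor <;> linarith
    · -- bound on Q (n+1)
      intro y
      have h1 := abs_le.1 (abs_mul_le (abs_mul_le (hQb (P n (finv y))) (hQb (finv y)))
        (F'_abs_le y))
      have h2 := abs_le.1 (abs_mul_le (Real.abs_cos_le_one (P n y)) (hQb y))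
      have h3 := abs_le.1 (abs_mul_le (Real.abs_sin_le_one (finv y)) (F'_abs_le y))
      rw [Q_succ, abs_le]
      constructor <;> (norm_num at h1 h2 h3 ⊢) <;> linarith
    · -- Lipschitz for P (n+1)
      intro a b
      have h1 := abs_le.1 (((hPl _ _).trans ((hPl _ _).trans (finv_lip a b))))
      have h2 := abs_le.1 ((sin_lip _ _).trans (hPl a b))
      have h3 := abs_le.1 ((cos_lip _ _).trans (finv_lip a b))
      have hab := abs_nonneg (a - b)
      rw [P_succ, P_succ, abs_le]
      constructor <;> linarith
    · -- Lipschitz for Q (n+1)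
      intro a b
      have hab := abs_nonneg (a - b)
      -- inner product difference
      have hinner : |Q n (P n (finv a)) * Q n (finv a) - Q n (P n (finv b)) * Q n (finv b)|
          ≤ (|a - b| / 5) * 1 + 1 * (|a - b| / 5) :=
        mul_diff_le (hQb _) (hQb _)
          ((hQl _ _).trans ((hPl _ _).trans (finv_lip a b)))
          ((hQl _ _).trans (finv_lip a b))
      have hT1 : |Q n (P n (finv a)) * Q n (finv a) * F' a
          - Q n (P n (finv b)) * Q n (finv b) * F' b|
          ≤ ((|a - b| / 5) * 1 + 1 * (|a - b| / 5)) * (1 / 5) + 1 * 1 * (|a - b| / 25) :=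
        mul_diff_le (abs_mul_le (hQb _) (hQb _)) (F'_abs_le a) hinner (F'_lip a b)
      have hT2 : |Real.cos (P n a) * Q n a - Real.cos (P n b) * Q n b|
          ≤ |a - b| * 1 + 1 * |a - b| :=
        mul_diff_le (Real.abs_cos_le_one _) (hQb a)
          ((cos_lip _ _).trans (hPl a b)) (hQl a b)
      have hT3 : |Real.sin (finv a) * F' a - Real.sin (finv b) * F' b|
          ≤ (|a - b| / 5) * (1 / 5) + 1 * (|a - b| / 25) :=
        mul_diff_le (Real.abs_sin_le_one _) (F'_abs_le a)
          ((sin_lip _ _).trans (finv_lip a b)) (F'_lip a b)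
      have h1 := abs_le.1 hT1
      have h2 := abs_le.1 hT2
      have h3 := abs_le.1 hT3
      rw [Q_succ, Q_succ, abs_le]
      constructor <;> linarith
    · -- derivative
      intro y
      have hfi := hasDerivAt_finv y
      have hinner : HasDerivAt (fun z => P n (finv z)) (Q n (finv y) * F' y) y :=
        HasDerivAt.comp y (hD (finv y)) hfi
      have hA : HasDerivAt (fun z => P n (P n (finv z)))
          (Q n (P n (finv y)) * (Q n (finv y) * F' y)) y :=
        HasDerivAt.comp y (hD (P n (finv y))) hinner
      have hS : HasDerivAt (fun z => Real.sin (P n z)) (Real.cos (P n y) * Q n y) y :=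
        HasDerivAt.comp y (Real.hasDerivAt_sin (P n y)) (hD y)
      have hC : HasDerivAt (fun z => Real.cos (finv z)) (-Real.sin (finv y) * F' y) y :=
        HasDerivAt.comp y (Real.hasDerivAt_cos (finv y)) hfi
      have htot := ((hA.sub hS).sub hC).div_const 4
      rw [P_succ_fun, Q_succ]
      exact htot.congr_deriv (by ring)

lemma contraction : ∀ n : ℕ, (∀ y, |P (n + 1) y - P n y| ≤ (1 / 4) * (3 / 4) ^ n) ∧
    (∀ y, |Q (n + 1) y - Q n y| ≤ (3 / 16) * (3 / 4) ^ n) := by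
  intro n
  induction n with
  | zero =>
    constructor
    · intro y
      have h3 := abs_le.1 (Real.abs_cos_le_one (finv y))
      rw [P_succ, abs_le]
      simp only [P_zero, Real.sin_zero]
      norm_num
      constructor <;> linarith
    · intro y
      have h := abs_le.1 (abs_mul_le (Real.abs_sin_le_one (finv y)) (F'_abs_le y))
      rw [Q_succ, abs_le]
      simp only [P_zero, Q_zero, Real.cos_zero]
      norm_num at h ⊢
      constructor <;> linarith
  | succ n IH =>
    obtain ⟨hdP, hdQ⟩ := IH
    obtain ⟨hPb, hQb, hPl, hQl, hD⟩ := invariant (n + 1)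
    obtain ⟨hPb0, hQb0, hPl0, hQl0, hD0⟩ := invariant n
    have hpow : ((3:ℝ) / 4) ^ (n + 1) = (3 / 4) ^ n * (3 / 4) := pow_succ _ _
    have hpnn : (0:ℝ) ≤ (3 / 4) ^ n := by positivity
    constructor
    · intro y
      have h1 : |P (n + 1) (P (n + 1) (finv y)) - P n (P n (finv y))| ≤
          (1 / 4) * (3 / 4) ^ n + (1 / 4) * (3 / 4) ^ n := by
        refine (abs_sub_le _ (P (n + 1) (P n (finv y))) _).trans (add_le_add ?_ ?_)
        · exact (hPl _ _).trans (hdP (finv y))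
        · exact hdP (P n (finv y))
      have h2 : |Real.sin (P (n + 1) y) - Real.sin (P n y)| ≤ (1 / 4) * (3 / 4) ^ n :=
        (sin_lip _ _).trans (hdP y)
      have h1' := abs_le.1 h1
      have h2' := abs_le.1 h2
      have key : P (n + 1 + 1) y - P (n + 1) y =
          ((P (n + 1) (P (n + 1) (finv y)) - P n (P n (finv y)))
            - (Real.sin (P (n + 1) y) - Real.sin (P n y))) / 4 := by
        rw [P_succ (n + 1) y, P_succ n y]; ring
      rw [key, abs_le, hpow]
      constructor <;> linarith
    · intro y
      have hQ1 : |Q (n + 1) (P (n + 1) (finv y)) - Q n (P n (finv y))| ≤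
          (1 / 4) * (3 / 4) ^ n + (3 / 16) * (3 / 4) ^ n := by
        refine (abs_sub_le _ (Q (n + 1) (P n (finv y))) _).trans (add_le_add ?_ ?_)
        · exact (hQl _ _).trans (hdP (finv y))
        · exact hdQ (P n (finv y))
      have hT1 : |Q (n + 1) (P (n + 1) (finv y)) * Q (n + 1) (finv y) * F' y
          - Q n (P n (finv y)) * Q n (finv y) * F' y| ≤
          (((1 / 4) * (3 / 4) ^ n + (3 / 16) * (3 / 4) ^ n) * 1
            + 1 * ((3 / 16) * (3 / 4) ^ n)) * (1 / 5) + 1 * 1 * 0 := by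
        refine mul_diff_le (abs_mul_le (hQb0 _) (hQb0 _)) (F'_abs_le y) ?_ (by simp)
        exact mul_diff_le (hQb0 _) (hQb _) hQ1 (hdQ (finv y))
      have hT2 : |Real.cos (P (n + 1) y) * Q (n + 1) y - Real.cos (P n y) * Q n y| ≤
          ((1 / 4) * (3 / 4) ^ n) * 1 + 1 * ((3 / 16) * (3 / 4) ^ n) :=
        mul_diff_le (Real.abs_cos_le_one _) (hQb y)
          ((cos_lip _ _).trans (hdP y)) (hdQ y)
      have h1' := abs_le.1 hT1
      have h2' := abs_le.1 hT2
      have key : Q (n + 1 + 1) y - Q (n + 1) y =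
          ((Q (n + 1) (P (n + 1) (finv y)) * Q (n + 1) (finv y) * F' y
              - Q n (P n (finv y)) * Q n (finv y) * F' y)
            - (Real.cos (P (n + 1) y) * Q (n + 1) y - Real.cos (P n y) * Q n y)) / 4 := by
        rw [Q_succ (n + 1) y, Q_succ n y]; ring
      rw [key, abs_le, hpow]
      constructor <;> linarith

lemma tailP (n : ℕ) : ∀ k : ℕ, ∀ y, |P (n + k) y - P n y| ≤ (3 / 4) ^ n - (3 / 4) ^ (n + k) := by
  intro k
  induction k with
  | zero => intro y; simp
  | succ k IH =>
    intro y
    have h1 := (contraction (n + k)).1 y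
    have h2 := IH y
    have h := (abs_sub_le (P (n + k + 1) y) (P (n + k) y) (P n y)).trans (add_le_add h1 h2)
    have hpow : ((3:ℝ) / 4) ^ (n + k + 1) = (3 / 4) ^ (n + k) * (3 / 4) := pow_succ _ _
    calc |P (n + (k + 1)) y - P n y| = |P (n + k + 1) y - P n y| := by ring_nf
      _ ≤ _ := h
      _ ≤ (3 / 4) ^ n - (3 / 4) ^ (n + (k + 1)) := by
          rw [show n + (k + 1) = n + k + 1 from rfl, hpow]; linarith

lemma tailQ (n : ℕ) : ∀ k : ℕ, ∀ y,
    |Q (n + k) y - Q n y| ≤ (3 / 4) * ((3 / 4) ^ n - (3 / 4) ^ (n + k)) := by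
  intro k
  induction k with
  | zero => intro y; simp
  | succ k IH =>
    intro y
    have h1 := (contraction (n + k)).2 y
    have h2 := IH y
    have h := (abs_sub_le (Q (n + k + 1) y) (Q (n + k) y) (Q n y)).trans (add_le_add h1 h2)
    have hpow : ((3:ℝ) / 4) ^ (n + k + 1) = (3 / 4) ^ (n + k) * (3 / 4) := pow_succ _ _
    calc |Q (n + (k + 1)) y - Q n y| = |Q (n + k + 1) y - Q n y| := by ring_nf
      _ ≤ _ := h
      _ ≤ (3 / 4) * ((3 / 4) ^ n - (3 / 4) ^ (n + (k + 1))) := by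
          rw [show n + (k + 1) = n + k + 1 from rfl, hpow]; linarith

lemma exP (x : ℝ) : ∃ l, Tendsto (fun n => P n x) atTop (𝓝 l) := by
  apply cauchySeq_tendsto_of_complete
  apply cauchySeq_of_le_geometric (3 / 4) (1 / 4) (by norm_num)
  intro n
  rw [Real.dist_eq, abs_sub_comm]
  exact (contraction n).1 x

lemma exQ (x : ℝ) : ∃ l, Tendsto (fun n => Q n x) atTop (𝓝 l) := by
  apply cauchySeq_tendsto_of_complete
  apply cauchySeq_of_le_geometric (3 / 4) (3 / 16) (by norm_num)
  intro n
  rw [Real.dist_eq, abs_sub_comm]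
  exact (contraction n).2 x

def φl : ℝ → ℝ := fun x => (exP x).choose
def ψl : ℝ → ℝ := fun x => (exQ x).choose

lemma tendP (x : ℝ) : Tendsto (fun n => P n x) atTop (𝓝 (φl x)) := (exP x).choose_spec
lemma tendQ (x : ℝ) : Tendsto (fun n => Q n x) atTop (𝓝 (ψl x)) := (exQ x).choose_spec

lemma nearP (n : ℕ) (x : ℝ) : |φl x - P n x| ≤ (3 / 4) ^ n := by
  have ht : Tendsto (fun k => P (k + n) x) atTop (𝓝 (φl x)) :=
    (tendP x).comp (tendsto_add_atTop_nat n)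
  have habs : Tendsto (fun k => |P (k + n) x - P n x|) atTop (𝓝 |φl x - P n x|) :=
    (ht.sub tendsto_const_nhds).abs
  refine le_of_tendsto habs (Eventually.of_forall fun k => ?_)
  have h := tailP n k x
  have hp : (0:ℝ) ≤ (3 / 4) ^ (n + k) := by positivity
  rw [Nat.add_comm k n]
  linarith

lemma nearQ (n : ℕ) (x : ℝ) : |ψl x - Q n x| ≤ (3 / 4) ^ n := by
  have ht : Tendsto (fun k => Q (k + n) x) atTop (𝓝 (ψl x)) :=
    (tendQ x).comp (tendsto_add_atTop_nat n)
  have habs : Tendsto (fun k => |Q (k + n) x - Q n x|) atTop (𝓝 |ψl x - Q n x|) :=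
    (ht.sub tendsto_const_nhds).abs
  refine le_of_tendsto habs (Eventually.of_forall fun k => ?_)
  have h := tailQ n k x
  have hp : (0:ℝ) ≤ (3 / 4) ^ (n + k) := by positivity
  have hp2 : (0:ℝ) ≤ (3 / 4) ^ n := by positivity
  rw [Nat.add_comm k n]
  linarith

lemma ψl_bound (x : ℝ) : |ψl x| ≤ 1 :=
  le_of_tendsto (tendQ x).abs (Eventually.of_forall fun n => (invariant n).2.1 x)

lemma ψl_lip (a b : ℝ) : |ψl a - ψl b| ≤ |a - b| :=
  le_of_tendsto ((tendQ a).sub (tendQ b)).abs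
    (Eventually.of_forall fun n => (invariant n).2.2.2.1 a b)

lemma ψl_cont : Continuous ψl := by
  have : LipschitzWith 1 ψl := by
    apply LipschitzWith.of_dist_le_mul
    intro a b
    rw [Real.dist_eq, Real.dist_eq]
    have := ψl_lip a b
    push_cast
    linarith
  exact this.continuous

lemma unifQ : TendstoUniformly Q ψl atTop := by
  rw [Metric.tendstoUniformly_iff]
  intro ε hε
  have h := (tendsto_pow_atTop_nhds_zero_of_lt_one
    (by norm_num : (0:ℝ) ≤ 3 / 4) (by norm_num)).eventually_lt_const hε
  filter_upwards [h] with n hn x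
  rw [Real.dist_eq]
  exact lt_of_le_of_lt (nearQ n x) hn

lemma hDeriv (x : ℝ) : HasDerivAt φl (ψl x) x :=
  hasDerivAt_of_tendstoUniformly unifQ
    (Eventually.of_forall fun n y => (invariant n).2.2.2.2 y) (fun y => tendP y) x

lemma feq (y : ℝ) :
    φl y = (φl (φl (finv y)) - Real.sin (φl y) - Real.cos (finv y)) / 4 := by
  have key : ∀ n : ℕ,
      |φl y - (φl (φl (finv y)) - Real.sin (φl y) - Real.cos (finv y)) / 4|
        ≤ (3 / 2) * (3 / 4) ^ n := by
    intro n
    have h0' := abs_le.1 (nearP (n + 1) y)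
    have h1 : |P n (P n (finv y)) - φl (φl (finv y))| ≤ 2 * (3 / 4) ^ n := by
      have ha : |P n (P n (finv y)) - P n (φl (finv y))| ≤ |P n (finv y) - φl (finv y)| :=
        (invariant n).2.2.1 _ _
      have hb : |P n (finv y) - φl (finv y)| ≤ (3 / 4) ^ n := by
        rw [abs_sub_comm]; exact nearP n (finv y)
      have hc : |P n (φl (finv y)) - φl (φl (finv y))| ≤ (3 / 4) ^ n := by
        rw [abs_sub_comm]; exact nearP n _
      have := (abs_sub_le (P n (P n (finv y))) (P n (φl (finv y)))
        (φl (φl (finv y)))).trans (add_le_add (ha.trans hb) hc)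
      linarith
    have h2 : |Real.sin (P n y) - Real.sin (φl y)| ≤ (3 / 4) ^ n :=
      (sin_lip _ _).trans (by rw [abs_sub_comm]; exact nearP n y)
    have key2 : P (n + 1) y
        - (φl (φl (finv y)) - Real.sin (φl y) - Real.cos (finv y)) / 4
        = ((P n (P n (finv y)) - φl (φl (finv y)))
            - (Real.sin (P n y) - Real.sin (φl y))) / 4 := by
      rw [P_succ n y]; ring
    have h1' := abs_le.1 h1
    have h2' := abs_le.1 h2
    have hpow : ((3:ℝ) / 4) ^ (n + 1) = (3 / 4) ^ n * (3 / 4) := pow_succ _ _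
    rw [abs_le]
    constructor <;> linarith [key2]
  have h0 : Tendsto (fun n : ℕ => (3 / 2) * (3 / 4 : ℝ) ^ n) atTop (𝓝 0) := by
    simpa using (tendsto_pow_atTop_nhds_zero_of_lt_one
      (by norm_num : (0:ℝ) ≤ 3 / 4) (by norm_num)).const_mul (3 / 2 : ℝ)
  have hD := ge_of_tendsto h0 (Eventually.of_forall key)
  have := abs_eq_zero.1 (le_antisymm hD (abs_nonneg _))
  linarith [this]

end Stmt16

theorem stmt_16 :
    ∃ φ : ℝ → ℝ, ContDiff ℝ 1 φ ∧ (∃ C, ∀ x, |deriv φ x| ≤ C) ∧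
      ∀ x : ℝ, φ (φ x) =
        Real.sin (φ (Real.exp x + 5 * x)) + 4 * φ (Real.exp x + 5 * x) +
          Real.cos x := by
  refine ⟨Stmt16.φl, ?_, ⟨1, fun x => ?_⟩, fun x => ?_⟩
  · rw [contDiff_one_iff_deriv]
    refine ⟨fun x => (Stmt16.hDeriv x).differentiableAt, ?_⟩
    have h : deriv Stmt16.φl = Stmt16.ψl := funext fun x => (Stmt16.hDeriv x).deriv
    rw [h]
    exact Stmt16.ψl_cont
  · rw [(Stmt16.hDeriv x).deriv]
    exact Stmt16.ψl_bound x
  · have h := Stmt16.feq (Stmt16.f x)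
    rw [Stmt16.finv_left] at h
    have hfx : Stmt16.f x = Real.exp x + 5 * x := rfl
    rw [hfx] at h
    linarith [h]
end
end
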